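/- arXiv:1807.02236 — 6 statements merged into one kernel-verified Lean document; each statement's English description precedes it below -/
import Mathlib

section
/- Let {x_1,…,x_d} and {z_1,…,z_d} be two orthonormal bases of ℂ^d with overlapping matrix U, coefficients s_1,…,s_d, and bound vector ω^{X⊕Z} as defined. Then for every density matrix ρ on ℂ^d, the 2d-dimensional vector p(x|ρ) ⊕ p(z|ρ) (the concatenation of the two measurement distributions) is majorized by ω^{X⊕Z}. -/
open Matrix
open scoped Kronecker ComplexOrder

noncomputable section

/-- Sum of the `k` largest entries of `v` (zero-padding implicit for nonneg vectors):
the maximum of `∑ i ∈ s, v i` over subsets `s` of cardinality at most `k`. -/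
def topSum {ι : Type*} [Fintype ι] (v : ι → ℝ) (k : ℕ) : ℝ :=
  (Finset.univ.powerset.filter fun s => s.card ≤ k).sup' ⟨∅, by simp⟩ fun s => ∑ i ∈ s, v i

/-- `v ≺ w` (majorization, with implicit zero padding): every partial sum of the `k` largest
entries of `v` is at most that of `w`, and the total sums are equal. -/
def Majorizes {ι κ : Type*} [Fintype ι] [Fintype κ] (v : ι → ℝ) (w : κ → ℝ) : Prop :=
  (∀ k : ℕ, topSum v k ≤ topSum w k) ∧ (∑ i, v i = ∑ j, w j)

/-- The operator norm (largest singular value) of a complex matrix. -/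
def opNorm {m n : Type*} [Fintype m] [Fintype n] [DecidableEq n] (M : Matrix m n ℂ) : ℝ :=
  ‖LinearMap.toContinuousLinearMap (Matrix.toEuclideanLin M)‖

/-- `sCoef U k = s_k`: the maximum operator norm over all submatrices of `U` of class `k`,
i.e. obtained by selecting nonempty row/column sets `R`, `C` with `|R| + |C| = k + 1`. -/
def sCoef {d : ℕ} (U : Matrix (Fin d) (Fin d) ℂ) (k : ℕ) : ℝ :=
  sSup { r : ℝ | ∃ R C : Finset (Fin d), R.Nonempty ∧ C.Nonempty ∧ R.card + C.card = k + 1 ∧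
    r = opNorm (U.submatrix (fun i : {i // i ∈ R} => (i : Fin d))
                            (fun j : {j // j ∈ C} => (j : Fin d))) }

/-- The bound vector `ω^{X⊕Z} = (1, s_1, s_2 - s_1, …, s_d - s_{d-1}, 0, …, 0) ∈ ℝ^{2d}`.
(Note `sCoef U 0 = sSup ∅ = 0`, so the entry at index `1` is `s_1`.) -/
def omegaDS {d : ℕ} (U : Matrix (Fin d) (Fin d) ℂ) : Fin (2 * d) → ℝ := fun i =>
  if (i : ℕ) = 0 then 1
  else if (i : ℕ) ≤ d then sCoef U (i : ℕ) - sCoef U ((i : ℕ) - 1)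
  else 0

/-- A density matrix: positive semidefinite with unit trace. -/
def IsDensityMatrix {n : Type*} [Fintype n] (ρ : Matrix n n ℂ) : Prop :=
  ρ.PosSemidef ∧ ρ.trace = 1

/-- A family of vectors forming an orthonormal basis of `ℂ^d` (w.r.t. `⟨u, v⟩ = star u ⬝ᵥ v`). -/
def OrthonormalBasisVecs {d : ℕ} (x : Fin d → Fin d → ℂ) : Prop :=
  ∀ i j, star (x i) ⬝ᵥ x j = if i = j then 1 else 0

/-- Measurement distribution of a density matrix `ρ` in the basis `x`: `p i = ⟨x i, ρ (x i)⟩`. -/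
def measDist {d : ℕ} (x : Fin d → Fin d → ℂ) (ρ : Matrix (Fin d) (Fin d) ℂ) : Fin d → ℝ :=
  fun i => (star (x i) ⬝ᵥ (ρ *ᵥ x i)).re

/-- The tensor product of vectors. -/
def tensorVec {dA dB : ℕ} (u : Fin dA → ℂ) (v : Fin dB → ℂ) : Fin dA × Fin dB → ℂ :=
  fun ab => u ab.1 * v ab.2

/-- Joint measurement distribution of a bipartite density matrix `ρ` in the product basis
`{xA i ⊗ xB j}`: `p (i,j) = ⟨xA i ⊗ xB j, ρ (xA i ⊗ xB j)⟩`. -/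
def jointDist {dA dB : ℕ} (xA : Fin dA → Fin dA → ℂ) (xB : Fin dB → Fin dB → ℂ)
    (ρ : Matrix (Fin dA × Fin dB) (Fin dA × Fin dB) ℂ) : Fin dA × Fin dB → ℝ :=
  fun ij => (star (tensorVec (xA ij.1) (xB ij.2)) ⬝ᵥ (ρ *ᵥ tensorVec (xA ij.1) (xB ij.2))).re

open scoped Classical in
/-- The finite set of distinct values of the products `α i * β j`. -/
def valueSet {dA dB : ℕ} (α : Fin dA → ℝ) (β : Fin dB → ℝ) : Finset ℝ :=
  Finset.image (fun ij : Fin dA × Fin dB => α ij.1 * β ij.2) Finset.univ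

open scoped Classical in
/-- The grouped distribution of a joint distribution `p`, indexed by the distinct values `l`
of the products `α i * β j`, with entries `∑_{(i,j) : α i * β j = l} p (i,j)`. -/
def groupedDist {dA dB : ℕ} (α : Fin dA → ℝ) (β : Fin dB → ℝ)
    (p : Fin dA × Fin dB → ℝ) : valueSet α β → ℝ :=
  fun l => ∑ ij ∈ Finset.univ.filter (fun ij : Fin dA × Fin dB => α ij.1 * β ij.2 = (l : ℝ)), p ij

/-- Separability: `ρ` is a finite convex combination of tensor products of density matrices. -/
def IsSeparableState {dA dB : ℕ} (ρ : Matrix (Fin dA × Fin dB) (Fin dA × Fin dB) ℂ) : Prop :=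
  ∃ (K : ℕ) (lam : Fin K → ℝ) (σ : Fin K → Matrix (Fin dA) (Fin dA) ℂ)
    (τ : Fin K → Matrix (Fin dB) (Fin dB) ℂ),
    (∀ k, 0 ≤ lam k) ∧ (∑ k, lam k = 1) ∧
    (∀ k, IsDensityMatrix (σ k)) ∧ (∀ k, IsDensityMatrix (τ k)) ∧
    ρ = ∑ k, (lam k : ℂ) • (σ k ⊗ₖ τ k)



set_option linter.unusedSectionVars false
set_option maxHeartbeats 1000000

open scoped InnerProductSpace

namespace Aux


variable {m n p : Type*} [Fintype m] [Fintype n] [Fintype p] [DecidableEq m] [DecidableEq n] [DecidableEq p]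

def eu {n : Type*} (v : n → ℂ) : EuclideanSpace ℂ n := (WithLp.equiv 2 (n → ℂ)).symm v

lemma inner_eu (u v : n → ℂ) : ⟪eu u, eu v⟫_ℂ = star u ⬝ᵥ v := by
  simp [eu, PiLp.inner_apply, dotProduct, mul_comm, RCLike.inner_apply]

lemma norm_eu_sq (v : n → ℂ) : (‖eu v‖ : ℝ) ^ 2 = (star v ⬝ᵥ v).re := by
  rw [← inner_eu v v, ← @inner_self_eq_norm_sq ℂ]; rfl

lemma opNorm_mulVec_le (M : Matrix m n ℂ) (v : n → ℂ) :
    ‖eu (M *ᵥ v)‖ ≤ opNorm M * ‖eu v‖ := by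
  have := (LinearMap.toContinuousLinearMap (Matrix.toEuclideanLin M)).le_opNorm (eu v)
  simpa [eu, opNorm] using this

lemma opNorm_le {M : Matrix m n ℂ} {c : ℝ} (hc : 0 ≤ c)
    (h : ∀ v : n → ℂ, ‖eu (M *ᵥ v)‖ ≤ c * ‖eu v‖) : opNorm M ≤ c := by
  apply ContinuousLinearMap.opNorm_le_bound _ hc
  intro v
  have := h ((WithLp.equiv 2 (n → ℂ)) v)
  simpa [eu, Matrix.toEuclideanLin_apply] using this

lemma opNorm_nonneg (M : Matrix m n ℂ) : 0 ≤ opNorm M := norm_nonneg _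

lemma le_of_sq_le_sq {a b : ℝ} (ha : 0 ≤ a) (hb : 0 ≤ b) (h : a ^ 2 ≤ b ^ 2) : a ≤ b := by
  nlinarith

lemma dot_self_mulVec (B : Matrix m n ℂ) (v : n → ℂ) :
    star (B *ᵥ v) ⬝ᵥ (B *ᵥ v) = star v ⬝ᵥ ((Bᴴ * B) *ᵥ v) := by
  rw [star_mulVec, dotProduct_mulVec, vecMul_vecMul, ← dotProduct_mulVec]

lemma opNorm_mul_le (A : Matrix m n ℂ) (B : Matrix n p ℂ) :
    opNorm (A * B) ≤ opNorm A * opNorm B := by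
  apply opNorm_le (mul_nonneg (opNorm_nonneg A) (opNorm_nonneg B))
  intro v
  rw [← mulVec_mulVec]
  calc ‖eu (A *ᵥ B *ᵥ v)‖ ≤ opNorm A * ‖eu (B *ᵥ v)‖ := opNorm_mulVec_le _ _
    _ ≤ opNorm A * (opNorm B * ‖eu v‖) := by
        have := opNorm_mulVec_le B v
        have h0 := opNorm_nonneg A
        nlinarith [norm_nonneg (eu (B *ᵥ v))]
    _ = opNorm A * opNorm B * ‖eu v‖ := by ring

/-- Isometry: if `Aᴴ * A = 1` then `opNorm A ≤ 1` (indeed `= 1` unless trivial). -/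
lemma opNorm_le_one_of_isometry {A : Matrix m n ℂ} (h : Aᴴ * A = 1) : opNorm A ≤ 1 := by
  apply opNorm_le zero_le_one
  intro v
  rw [one_mul]
  apply le_of_sq_le_sq (norm_nonneg _) (norm_nonneg _)
  rw [norm_eu_sq, norm_eu_sq, dot_self_mulVec, h, one_mulVec]


lemma re_dot_self (w : n → ℂ) : (star w ⬝ᵥ w).re = ∑ j, Complex.normSq (w j) := by
  rw [dotProduct, Complex.re_sum]
  apply Finset.sum_congr rfl
  intro j _
  simp [Complex.normSq_apply, Complex.mul_re]

variable {d : ℕ}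

def colMat (y : Fin d → Fin d → ℂ) (A : Finset (Fin d)) : Matrix (Fin d) {i // i ∈ A} ℂ :=
  Matrix.of fun a i => y i a

def sqMat (y : Fin d → Fin d → ℂ) : Matrix (Fin d) (Fin d) ℂ := Matrix.of fun a i => y i a

variable {y : Fin d → Fin d → ℂ} (hy : ∀ i j, star (y i) ⬝ᵥ y j = if i = j then 1 else 0)

include hy in
lemma colMat_adj_mul (A : Finset (Fin d)) : (colMat y A)ᴴ * colMat y A = 1 := by
  ext i j
  have h := hy (i : Fin d) (j : Fin d)
  simp only [Subtype.coe_inj] at h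
  simp only [mul_apply, conjTranspose_apply, colMat, of_apply, one_apply, ← h, dotProduct,
    Pi.star_apply]

include hy in
lemma sqMat_adj_mul : (sqMat y)ᴴ * sqMat y = 1 := by
  ext i j
  have h := hy i j
  simp only [mul_apply, conjTranspose_apply, sqMat, of_apply, one_apply, ← h, dotProduct,
    Pi.star_apply]

include hy in
lemma sqMat_mul_adj : sqMat y * (sqMat y)ᴴ = 1 :=
  mul_eq_one_comm.mp (sqMat_adj_mul hy)

lemma colMat_entry_mulVec (A : Finset (Fin d)) (v : Fin d → ℂ) (j : {i // i ∈ A}) :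
    ((colMat y A)ᴴ *ᵥ v) j = star (y (j : Fin d)) ⬝ᵥ v := by
  simp [colMat, mulVec, dotProduct, conjTranspose_apply]

include hy in
lemma sum_normSq_eq (v : Fin d → ℂ) :
    ∑ j, Complex.normSq (star (y j) ⬝ᵥ v) = (star v ⬝ᵥ v).re := by
  have hB : ((sqMat y)ᴴ)ᴴ * (sqMat y)ᴴ = 1 := by
    rw [conjTranspose_conjTranspose]; exact sqMat_mul_adj hy
  have h := dot_self_mulVec ((sqMat y)ᴴ) v
  rw [hB, one_mulVec] at h
  rw [← h, re_dot_self]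
  apply Finset.sum_congr rfl
  intro j _
  congr 1

include hy in
lemma besselDot (A : Finset (Fin d)) (v : Fin d → ℂ) :
    (star ((colMat y A)ᴴ *ᵥ v) ⬝ᵥ ((colMat y A)ᴴ *ᵥ v)).re ≤ (star v ⬝ᵥ v).re := by
  rw [re_dot_self, ← sum_normSq_eq hy v]
  have h1 : ∑ j : {i // i ∈ A}, Complex.normSq (((colMat y A)ᴴ *ᵥ v) j)
      = ∑ j ∈ A, Complex.normSq (star (y j) ⬝ᵥ v) := by
    rw [← Finset.sum_coe_sort A (fun j => Complex.normSq (star (y j) ⬝ᵥ v))]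
    apply Finset.sum_congr rfl
    intro j _
    rw [colMat_entry_mulVec]
  rw [h1]
  apply Finset.sum_le_sum_of_subset_of_nonneg (Finset.subset_univ A)
  intro j _ _
  exact Complex.normSq_nonneg _

include hy in
lemma opNorm_colMat_le_one (A : Finset (Fin d)) : opNorm (colMat y A) ≤ 1 :=
  opNorm_le_one_of_isometry (colMat_adj_mul hy A)

include hy in
lemma opNorm_colMat_adj_le_one (A : Finset (Fin d)) : opNorm ((colMat y A)ᴴ) ≤ 1 := by
  apply opNorm_le zero_le_one
  intro v
  rw [one_mul]
  apply le_of_sq_le_sq (norm_nonneg _) (norm_nonneg _)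
  rw [norm_eu_sq, norm_eu_sq]
  exact besselDot hy A v

/-- Square matrix to continuous linear map on Euclidean space. -/
def clm (T : Matrix n n ℂ) : EuclideanSpace ℂ n →L[ℂ] EuclideanSpace ℂ n :=
  LinearMap.toContinuousLinearMap (Matrix.toEuclideanLin T)

lemma norm_clm (T : Matrix n n ℂ) : ‖clm T‖ = opNorm T := rfl

lemma clm_mul (S T : Matrix n n ℂ) : clm (S * T) = clm S * clm T := by
  ext1 v
  show Matrix.toEuclideanLin (S * T) v = Matrix.toEuclideanLin S (Matrix.toEuclideanLin T v)
  rw [Matrix.toEuclideanLin_apply, Matrix.toEuclideanLin_apply, Matrix.toEuclideanLin_apply]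
  simp [mulVec_mulVec]

lemma clm_add (S T : Matrix n n ℂ) : clm (S + T) = clm S + clm T := by
  ext1 v
  show Matrix.toEuclideanLin (S + T) v = Matrix.toEuclideanLin S v + Matrix.toEuclideanLin T v
  rw [map_add]
  rfl

lemma clm_star (T : Matrix n n ℂ) : star (clm T) = clm Tᴴ := by
  rw [ContinuousLinearMap.star_eq_adjoint]
  unfold clm
  rw [Matrix.toEuclideanLin_conjTranspose_eq_adjoint, LinearMap.adjoint_toContinuousLinearMap]


lemma dot_T_le (T : Matrix n n ℂ) (u : n → ℂ) :
    (star u ⬝ᵥ (T *ᵥ u)).re ≤ opNorm T * (star u ⬝ᵥ u).re := by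
  have h1 : star u ⬝ᵥ (T *ᵥ u) = ⟪eu u, eu (T *ᵥ u)⟫_ℂ := (inner_eu u (T *ᵥ u)).symm
  have h2 : (⟪eu u, eu (T *ᵥ u)⟫_ℂ).re ≤ ‖eu u‖ * ‖eu (T *ᵥ u)‖ := by
    simpa using re_inner_le_norm (𝕜 := ℂ) (eu u) (eu (T *ᵥ u))
  have h3 : ‖eu (T *ᵥ u)‖ ≤ opNorm T * ‖eu u‖ := opNorm_mulVec_le T u
  have h4 := norm_eu_sq u
  have h5 := norm_nonneg (eu u)
  have h6 := opNorm_nonneg T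
  rw [h1]
  nlinarith

lemma trace_bound {ρ : Matrix n n ℂ} (hpsd : ρ.PosSemidef) (htr : ρ.trace = 1)
    (T : Matrix n n ℂ) : (trace (ρ * T)).re ≤ opNorm T := by
  open scoped MatrixOrder in
  set S := CFC.sqrt ρ with hSdef
  have hS2 : S * S = ρ := CFC.sqrt_mul_sqrt_self ρ hpsd.nonneg
  have hSH : Sᴴ = S := (CFC.sqrt_nonneg ρ).posSemidef.1
  have hconj : ∀ a t, (starRingEnd ℂ) (S a t) = S t a := by
    intro a t
    have : Sᴴ t a = S t a := by rw [hSH]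
    rw [← this, conjTranspose_apply]
    rfl
  have key : trace (ρ * T) = ∑ t, star (fun a => S a t) ⬝ᵥ (T *ᵥ fun a => S a t) := by
    rw [← hS2, mul_assoc, trace_mul_comm]
    unfold trace
    apply Finset.sum_congr rfl
    intro t _
    simp only [diag_apply, mul_apply, dotProduct, mulVec, Pi.star_apply, dotProduct,
      Finset.sum_mul, Finset.mul_sum]
    rw [Finset.sum_comm]
    apply Finset.sum_congr rfl
    intro a _
    apply Finset.sum_congr rfl
    intro b _
    have : star (S a t) = S t a := hconj a t
    rw [this]
    ring
  have hw : ∑ t, (star (fun a => S a t) ⬝ᵥ (fun a => S a t)).re = 1 := by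
    have : ∑ t, star (fun a => S a t) ⬝ᵥ (fun a => S a t) = trace ρ := by
      rw [← hS2]
      unfold trace
      apply Finset.sum_congr rfl
      intro t _
      simp only [diag_apply, mul_apply, dotProduct, Pi.star_apply]
      apply Finset.sum_congr rfl
      intro a _
      have h7 : star (S a t) = S t a := hconj a t
      rw [h7]
    rw [← Complex.re_sum, this, htr]
    rfl
  rw [key, Complex.re_sum]
  calc ∑ t, (star (fun a => S a t) ⬝ᵥ (T *ᵥ fun a => S a t)).re
      ≤ ∑ t, opNorm T * (star (fun a => S a t) ⬝ᵥ (fun a => S a t)).re :=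
        Finset.sum_le_sum fun t _ => dot_T_le T _
    _ = opNorm T * ∑ t, (star (fun a => S a t) ⬝ᵥ (fun a => S a t)).re := by
        rw [Finset.mul_sum]
    _ = opNorm T := by rw [hw, mul_one]

include hy in
lemma trace_rho_proj (ρ : Matrix (Fin d) (Fin d) ℂ) (A : Finset (Fin d)) :
    trace (ρ * (colMat y A * (colMat y A)ᴴ)) = ∑ i ∈ A, star (y i) ⬝ᵥ (ρ *ᵥ y i) := by
  rw [← Matrix.mul_assoc, Matrix.trace_mul_comm]
  rw [← Finset.sum_coe_sort A (fun i => star (y i) ⬝ᵥ (ρ *ᵥ y i))]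
  unfold trace
  apply Finset.sum_congr rfl
  intro i _
  simp only [diag_apply, mul_apply, conjTranspose_apply, colMat, of_apply, dotProduct,
    Pi.star_apply, mulVec, dotProduct, Finset.mul_sum]

include hy in
lemma sum_dot_eq_trace (ρ : Matrix (Fin d) (Fin d) ℂ) :
    ∑ i, star (y i) ⬝ᵥ (ρ *ᵥ y i) = trace ρ := by
  have h := trace_rho_proj hy ρ Finset.univ
  have hco : colMat y Finset.univ * (colMat y Finset.univ)ᴴ = 1 := by
    have h1 : (colMat y Finset.univ)ᴴ * colMat y Finset.univ = 1 := colMat_adj_mul hy _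
    exact (Matrix.mul_eq_one_comm_of_equiv (Equiv.subtypeUnivEquiv (fun i => Finset.mem_univ i))).mp h1
  rw [hco, mul_one] at h
  rw [← h]

section CStar
variable {𝔸 : Type*} [NormedRing 𝔸] [StarRing 𝔸] [CStarRing 𝔸]

lemma norm_le_one_of_proj {p : 𝔸} (hp : IsSelfAdjoint p) (hp2 : p * p = p) : ‖p‖ ≤ 1 := by
  have h1 : ‖p‖ * ‖p‖ = ‖p‖ := by
    rw [← CStarRing.norm_star_mul_self (x := p), hp.star_eq, hp2]
  nlinarith [norm_nonneg p]

lemma sum_proj_norm_le {p q : 𝔸} (hp : IsSelfAdjoint p) (hp2 : p * p = p)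
    (hq : IsSelfAdjoint q) (hq2 : q * q = q) : ‖p + q‖ ≤ 1 + ‖p * q‖ := by
  set s := ‖p * q‖ with hs
  have hs0 : 0 ≤ s := norm_nonneg _
  have hqp : ‖q * p‖ = s := by
    have : q * p = star (p * q) := by rw [StarMul.star_mul, hp.star_eq, hq.star_eq]
    rw [this, norm_star]
  have hpn : ‖p‖ ≤ 1 := norm_le_one_of_proj hp hp2
  have hqn : ‖q‖ ≤ 1 := norm_le_one_of_proj hq hq2
  -- induction bound
  have key : ∀ n : ℕ, ‖(p + q) ^ n * p‖ + ‖(p + q) ^ n * q‖ ≤ 2 * (1 + s) ^ n := by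
    intro n
    induction n with
    | zero => simpa using by linarith
    | succ n ih =>
      have hfp : (p + q) ^ (n + 1) * p = ((p + q) ^ n * p) * p + ((p + q) ^ n * q) * (q * p) := by
        rw [pow_succ, mul_assoc, mul_assoc, mul_assoc]
        rw [add_mul, hp2, ← mul_assoc q q p, hq2, mul_add]
      have hfq : (p + q) ^ (n + 1) * q = ((p + q) ^ n * p) * (p * q) + ((p + q) ^ n * q) * q := by
        rw [pow_succ, mul_assoc, mul_assoc, mul_assoc]
        rw [add_mul, hq2, ← mul_assoc p p q, hp2, mul_add]
      have b1 : ‖(p + q) ^ (n + 1) * p‖ ≤ ‖(p + q) ^ n * p‖ + ‖(p + q) ^ n * q‖ * s := by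
        rw [hfp]
        calc ‖((p + q) ^ n * p) * p + ((p + q) ^ n * q) * (q * p)‖
            ≤ ‖((p + q) ^ n * p) * p‖ + ‖((p + q) ^ n * q) * (q * p)‖ := norm_add_le _ _
          _ ≤ ‖(p + q) ^ n * p‖ * ‖p‖ + ‖(p + q) ^ n * q‖ * ‖q * p‖ := by
              gcongr <;> exact norm_mul_le _ _
          _ ≤ ‖(p + q) ^ n * p‖ + ‖(p + q) ^ n * q‖ * s := by
              rw [hqp]
              have := norm_nonneg ((p + q) ^ n * p)
              nlinarith
      have b2 : ‖(p + q) ^ (n + 1) * q‖ ≤ ‖(p + q) ^ n * p‖ * s + ‖(p + q) ^ n * q‖ := by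
        rw [hfq]
        calc ‖((p + q) ^ n * p) * (p * q) + ((p + q) ^ n * q) * q‖
            ≤ ‖((p + q) ^ n * p) * (p * q)‖ + ‖((p + q) ^ n * q) * q‖ := norm_add_le _ _
          _ ≤ ‖(p + q) ^ n * p‖ * ‖p * q‖ + ‖(p + q) ^ n * q‖ * ‖q‖ := by
              gcongr <;> exact norm_mul_le _ _
          _ ≤ ‖(p + q) ^ n * p‖ * s + ‖(p + q) ^ n * q‖ := by
              have := norm_nonneg ((p + q) ^ n * q)
              nlinarith
      calc ‖(p + q) ^ (n + 1) * p‖ + ‖(p + q) ^ (n + 1) * q‖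
          ≤ (‖(p + q) ^ n * p‖ + ‖(p + q) ^ n * q‖) * (1 + s) := by nlinarith
        _ ≤ 2 * (1 + s) ^ n * (1 + s) := by nlinarith
        _ = 2 * (1 + s) ^ (n + 1) := by ring
  -- power bound for t = ‖p+q‖
  have hpq : IsSelfAdjoint (p + q) := hp.add hq
  have tpow : ∀ m : ℕ, ‖p + q‖ ^ (2 ^ m) ≤ 2 * (1 + s) ^ (2 ^ m) := by
    intro m
    have h1 : ‖(p + q) ^ (2 ^ m)‖ = ‖p + q‖ ^ (2 ^ m) := by
      have h := hpq.nnnorm_pow_two_pow (n := m)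
      calc ‖(p + q) ^ (2 ^ m)‖ = ((‖(p + q) ^ (2 ^ m)‖₊ : ℝ)) := (coe_nnnorm _).symm
        _ = ((‖p + q‖₊ ^ (2 ^ m) : NNReal) : ℝ) := by rw [h]
        _ = ‖p + q‖ ^ (2 ^ m) := by push_cast; rfl
    have h2 : 2 ^ m = (2 ^ m - 1) + 1 := by
      have : 1 ≤ 2 ^ m := Nat.one_le_two_pow
      omega
    have h3 : ‖(p + q) ^ (2 ^ m)‖ ≤ 2 * (1 + s) ^ (2 ^ m - 1) := by
      calc ‖(p + q) ^ (2 ^ m)‖ = ‖(p + q) ^ (2 ^ m - 1) * p + (p + q) ^ (2 ^ m - 1) * q‖ := by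
            conv_lhs => rw [h2, pow_succ]
            rw [mul_add]
        _ ≤ ‖(p + q) ^ (2 ^ m - 1) * p‖ + ‖(p + q) ^ (2 ^ m - 1) * q‖ := norm_add_le _ _
        _ ≤ 2 * (1 + s) ^ (2 ^ m - 1) := key _
    rw [← h1]
    calc ‖(p + q) ^ (2 ^ m)‖ ≤ 2 * (1 + s) ^ (2 ^ m - 1) := h3
      _ ≤ 2 * (1 + s) ^ (2 ^ m) := by
          gcongr
          · linarith
          · omega
  by_contra hcon
  push_neg at hcon
  have h1s : (0:ℝ) < 1 + s := by linarith
  set r : ℝ := ‖p + q‖ / (1 + s) with hr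
  have hr1 : 1 < r := (one_lt_div h1s).2 hcon
  obtain ⟨n, hn⟩ := pow_unbounded_of_one_lt (2 : ℝ) hr1
  have h2 : r ^ n ≤ r ^ (2 ^ n) := by
    apply pow_le_pow_right₀ (le_of_lt hr1) (Nat.le_of_lt (Nat.lt_two_pow_self : n < 2 ^ n))
  have h3 : r ^ (2 ^ n) ≤ 2 := by
    rw [hr, div_pow, div_le_iff₀ (by positivity)]
    calc ‖p + q‖ ^ 2 ^ n ≤ 2 * (1 + s) ^ 2 ^ n := tpow n
    _ = 2 * (1 + s) ^ 2 ^ n := rfl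
  linarith
end CStar


lemma submatrix_eq {d : ℕ} (x z : Fin d → Fin d → ℂ)
    (U : Matrix (Fin d) (Fin d) ℂ) (hU : ∀ i j, U i j = star (x i) ⬝ᵥ z j)
    (A B : Finset (Fin d)) :
    U.submatrix (fun i : {i // i ∈ A} => (i : Fin d)) (fun j : {j // j ∈ B} => (j : Fin d))
      = (colMat x A)ᴴ * colMat z B := by
  ext i j
  rw [submatrix_apply, hU]
  simp [mul_apply, conjTranspose_apply, colMat, dotProduct]

lemma opNorm_submatrix_le_one {d : ℕ} {x z : Fin d → Fin d → ℂ}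
    (hx : ∀ i j, star (x i) ⬝ᵥ x j = if i = j then 1 else 0)
    (hz : ∀ i j, star (z i) ⬝ᵥ z j = if i = j then 1 else 0)
    {U : Matrix (Fin d) (Fin d) ℂ} (hU : ∀ i j, U i j = star (x i) ⬝ᵥ z j)
    (A B : Finset (Fin d)) :
    opNorm (U.submatrix (fun i : {i // i ∈ A} => (i : Fin d))
                        (fun j : {j // j ∈ B} => (j : Fin d))) ≤ 1 := by
  rw [submatrix_eq x z U hU A B]
  calc opNorm ((colMat x A)ᴴ * colMat z B)
      ≤ opNorm ((colMat x A)ᴴ) * opNorm (colMat z B) := opNorm_mul_le _ _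
    _ ≤ 1 := by
        have h1 := opNorm_colMat_adj_le_one hx A
        have h2 := opNorm_colMat_le_one hz B
        have h3 := opNorm_nonneg ((colMat x A)ᴴ)
        have h4 := opNorm_nonneg (colMat z B)
        nlinarith

lemma key_bound {d : ℕ} {x z : Fin d → Fin d → ℂ}
    (hx : ∀ i j, star (x i) ⬝ᵥ x j = if i = j then 1 else 0)
    (hz : ∀ i j, star (z i) ⬝ᵥ z j = if i = j then 1 else 0)
    {U : Matrix (Fin d) (Fin d) ℂ} (hU : ∀ i j, U i j = star (x i) ⬝ᵥ z j)
    {ρ : Matrix (Fin d) (Fin d) ℂ} (hpsd : ρ.PosSemidef) (htr : ρ.trace = 1)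
    (A B : Finset (Fin d)) :
    (∑ i ∈ A, (star (x i) ⬝ᵥ (ρ *ᵥ x i)).re) + (∑ j ∈ B, (star (z j) ⬝ᵥ (ρ *ᵥ z j)).re)
      ≤ 1 + opNorm (U.submatrix (fun i : {i // i ∈ A} => (i : Fin d))
                                (fun j : {j // j ∈ B} => (j : Fin d))) := by
  set X := colMat x A with hX
  set Z := colMat z B with hZ
  set P := X * Xᴴ with hP
  set Q := Z * Zᴴ with hQ
  have hPH : Pᴴ = P := by rw [hP, conjTranspose_mul, conjTranspose_conjTranspose]
  have hQH : Qᴴ = Q := by rw [hQ, conjTranspose_mul, conjTranspose_conjTranspose]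
  have hP2 : P * P = P := by
    rw [hP, Matrix.mul_assoc, ← Matrix.mul_assoc Xᴴ X Xᴴ, colMat_adj_mul hx, Matrix.one_mul]
  have hQ2 : Q * Q = Q := by
    rw [hQ, Matrix.mul_assoc, ← Matrix.mul_assoc Zᴴ Z Zᴴ, colMat_adj_mul hz, Matrix.one_mul]
  -- LHS as a trace
  have hL : (∑ i ∈ A, (star (x i) ⬝ᵥ (ρ *ᵥ x i)).re) + (∑ j ∈ B, (star (z j) ⬝ᵥ (ρ *ᵥ z j)).re)
      = (trace (ρ * (P + Q))).re := by
    rw [Matrix.mul_add, trace_add, Complex.add_re, ← Complex.re_sum, ← Complex.re_sum,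
      hP, hX, hQ, hZ, trace_rho_proj hx ρ A, trace_rho_proj hz ρ B]
  rw [hL]
  have step1 : (trace (ρ * (P + Q))).re ≤ opNorm (P + Q) := trace_bound hpsd htr _
  have hsa_p : _root_.IsSelfAdjoint (clm P) := by
    rw [isSelfAdjoint_iff, clm_star, hPH]
  have hsa_q : _root_.IsSelfAdjoint (clm Q) := by
    rw [isSelfAdjoint_iff, clm_star, hQH]
  have hip : clm P * clm P = clm P := by rw [← clm_mul, hP2]
  have hiq : clm Q * clm Q = clm Q := by rw [← clm_mul, hQ2]
  have step2 : opNorm (P + Q) ≤ 1 + opNorm (P * Q) := by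
    have h := sum_proj_norm_le hsa_p hip hsa_q hiq
    rw [← clm_add, ← clm_mul, norm_clm, norm_clm] at h
    exact h
  have step3 : opNorm (P * Q)
      ≤ opNorm (U.submatrix (fun i : {i // i ∈ A} => (i : Fin d))
                            (fun j : {j // j ∈ B} => (j : Fin d))) := by
    rw [submatrix_eq x z U hU A B]
    have hfac : P * Q = X * ((Xᴴ * Z) * Zᴴ) := by
      rw [hP, hQ, Matrix.mul_assoc, ← Matrix.mul_assoc Xᴴ Z Zᴴ]
    rw [hfac]
    have h1 : opNorm (X * ((Xᴴ * Z) * Zᴴ)) ≤ opNorm X * opNorm ((Xᴴ * Z) * Zᴴ) :=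
      opNorm_mul_le _ _
    have h2 : opNorm ((Xᴴ * Z) * Zᴴ) ≤ opNorm (Xᴴ * Z) * opNorm Zᴴ := opNorm_mul_le _ _
    have h3 : opNorm X ≤ 1 := opNorm_colMat_le_one hx A
    have h4 : opNorm Zᴴ ≤ 1 := opNorm_colMat_adj_le_one hz B
    have n1 := opNorm_nonneg X
    have n2 := opNorm_nonneg ((Xᴴ * Z) * Zᴴ)
    have n3 := opNorm_nonneg (Xᴴ * Z)
    have n4 := opNorm_nonneg Zᴴ
    nlinarith
  linarith



lemma opNorm_submatrix_mono {d : ℕ} (U : Matrix (Fin d) (Fin d) ℂ) {R R' : Finset (Fin d)}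
    (C : Finset (Fin d)) (h : R ⊆ R') :
    opNorm (U.submatrix (fun i : {i // i ∈ R} => (i : Fin d))
                        (fun j : {j // j ∈ C} => (j : Fin d)))
      ≤ opNorm (U.submatrix (fun i : {i // i ∈ R'} => (i : Fin d))
                            (fun j : {j // j ∈ C} => (j : Fin d))) := by
  set M := U.submatrix (fun i : {i // i ∈ R} => (i : Fin d)) (fun j : {j // j ∈ C} => (j : Fin d))
    with hM
  set M' := U.submatrix (fun i : {i // i ∈ R'} => (i : Fin d)) (fun j : {j // j ∈ C} => (j : Fin d))
    with hM'
  apply opNorm_le (opNorm_nonneg M')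
  intro v
  apply le_of_sq_le_sq (norm_nonneg _) (mul_nonneg (opNorm_nonneg M') (norm_nonneg _))
  have hbig := opNorm_mulVec_le M' v
  have h2 : (‖eu (M' *ᵥ v)‖ : ℝ) ^ 2 ≤ (opNorm M' * ‖eu v‖) ^ 2 := by
    nlinarith [norm_nonneg (eu (M' *ᵥ v))]
  refine le_trans ?_ h2
  rw [norm_eu_sq, norm_eu_sq, re_dot_self, re_dot_self]
  set G : Fin d → ℝ := fun a => Complex.normSq (∑ j : {j // j ∈ C}, U a (j : Fin d) * v j)
    with hG
  have eR : ∑ i : {i // i ∈ R}, Complex.normSq ((M *ᵥ v) i) = ∑ i ∈ R, G i := by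
    rw [← Finset.sum_coe_sort R G]
    refine Finset.sum_congr rfl fun i _ => ?_
    rw [hG, hM]
    simp [mulVec, dotProduct]
  have eR' : ∑ i : {i // i ∈ R'}, Complex.normSq ((M' *ᵥ v) i) = ∑ i ∈ R', G i := by
    rw [← Finset.sum_coe_sort R' G]
    refine Finset.sum_congr rfl fun i _ => ?_
    rw [hG, hM']
    simp [mulVec, dotProduct]
  rw [eR, eR']
  exact Finset.sum_le_sum_of_subset_of_nonneg h fun i _ _ => Complex.normSq_nonneg _

/-! ### topSum utilities -/

lemma le_topSum {ι : Type*} [Fintype ι] (v : ι → ℝ) {k : ℕ} {s : Finset ι} (hs : s.card ≤ k) :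
    ∑ i ∈ s, v i ≤ topSum v k := by
  refine Finset.le_sup' (fun t => ∑ i ∈ t, v i) ?_
  simp only [Finset.mem_filter, Finset.mem_powerset]
  exact ⟨Finset.subset_univ s, hs⟩

lemma topSum_le {ι : Type*} [Fintype ι] (v : ι → ℝ) {k : ℕ} {c : ℝ} (h0 : 0 ≤ c)
    (h : ∀ s : Finset ι, s.card ≤ k → ∑ i ∈ s, v i ≤ c) : topSum v k ≤ c := by
  apply Finset.sup'_le
  intro s hs
  simp only [Finset.mem_filter, Finset.mem_powerset] at hs
  exact h s hs.2

lemma topSum_nonneg {ι : Type*} [Fintype ι] (v : ι → ℝ) (k : ℕ) : 0 ≤ topSum v k := by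
  simpa using le_topSum v (s := (∅ : Finset ι)) (Nat.zero_le k)

lemma topSum_mono {ι : Type*} [Fintype ι] (v : ι → ℝ) {k k' : ℕ} (h : k ≤ k') :
    topSum v k ≤ topSum v k' := by
  apply Finset.sup'_le
  intro s hs
  simp only [Finset.mem_filter, Finset.mem_powerset] at hs
  exact le_topSum v (hs.2.trans h)

lemma sum_attachFin {N : ℕ} (s : Finset ℕ) (h : ∀ m ∈ s, m < N) (F : ℕ → ℝ) :
    ∑ i ∈ s.attachFin h, F (i : ℕ) = ∑ m ∈ s, F m := by
  apply Finset.sum_bij (fun (i : Fin N) (_ : i ∈ s.attachFin h) => (i : ℕ))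
  · intro a ha; exact (Finset.mem_attachFin h).mp ha
  · intro a ha b hb hab; exact Fin.val_injective hab
  · intro b hb; exact ⟨⟨b, h b hb⟩, (Finset.mem_attachFin h).mpr hb, rfl⟩
  · intro a ha; rfl

/-! ### sCoef facts -/

section SCoef

variable {d : ℕ} {x z : Fin d → Fin d → ℂ} {U : Matrix (Fin d) (Fin d) ℂ}

def sSet (U : Matrix (Fin d) (Fin d) ℂ) (k : ℕ) : Set ℝ :=
  { r : ℝ | ∃ R C : Finset (Fin d), R.Nonempty ∧ C.Nonempty ∧ R.card + C.card = k + 1 ∧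
    r = opNorm (U.submatrix (fun i : {i // i ∈ R} => (i : Fin d))
                            (fun j : {j // j ∈ C} => (j : Fin d))) }

lemma sCoef_eq (k : ℕ) : sCoef U k = sSup (sSet U k) := rfl

lemma sSet_bddAbove (hx : OrthonormalBasisVecs x) (hz : OrthonormalBasisVecs z)
    (hU : ∀ i j, U i j = star (x i) ⬝ᵥ z j) (k : ℕ) : BddAbove (sSet U k) := by
  refine ⟨1, ?_⟩
  rintro r ⟨R, C, -, -, -, rfl⟩
  exact opNorm_submatrix_le_one hx hz hU R C

lemma sCoef_nonneg (hx : OrthonormalBasisVecs x) (hz : OrthonormalBasisVecs z)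
    (hU : ∀ i j, U i j = star (x i) ⬝ᵥ z j) (k : ℕ) : 0 ≤ sCoef U k := by
  rcases Set.eq_empty_or_nonempty (sSet U k) with he | hne
  · rw [sCoef_eq, he, Real.sSup_empty]
  · obtain ⟨r, hr⟩ := hne
    have h0 : 0 ≤ r := by
      obtain ⟨R, C, -, -, -, rfl⟩ := hr
      exact opNorm_nonneg _
    calc (0:ℝ) ≤ r := h0
      _ ≤ sCoef U k := le_csSup (sSet_bddAbove hx hz hU k) hr

lemma sCoef_le_one (hx : OrthonormalBasisVecs x) (hz : OrthonormalBasisVecs z)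
    (hU : ∀ i j, U i j = star (x i) ⬝ᵥ z j) (k : ℕ) : sCoef U k ≤ 1 := by
  rcases Set.eq_empty_or_nonempty (sSet U k) with he | hne
  · rw [sCoef_eq, he, Real.sSup_empty]; norm_num
  · apply csSup_le hne
    rintro r ⟨R, C, -, -, -, rfl⟩
    exact opNorm_submatrix_le_one hx hz hU R C

lemma sCoef_zero : sCoef U 0 = 0 := by
  have he : sSet U 0 = ∅ := by
    ext r
    simp only [sSet, Set.mem_setOf_eq, Set.mem_empty_iff_false, iff_false, not_exists]
    rintro R C ⟨hR, hC, hcard, -⟩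
    have h1 := hR.card_pos
    have h2 := hC.card_pos
    omega
  rw [sCoef_eq, he, Real.sSup_empty]

lemma opNorm_submatrix_le_sCoef (hx : OrthonormalBasisVecs x) (hz : OrthonormalBasisVecs z)
    (hU : ∀ i j, U i j = star (x i) ⬝ᵥ z j) {R C : Finset (Fin d)} (hR : R.Nonempty)
    (hC : C.Nonempty) {k : ℕ} (hcard : R.card + C.card = k + 1) :
    opNorm (U.submatrix (fun i : {i // i ∈ R} => (i : Fin d))
                        (fun j : {j // j ∈ C} => (j : Fin d))) ≤ sCoef U k :=
  le_csSup (sSet_bddAbove hx hz hU k) ⟨R, C, hR, hC, hcard, rfl⟩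

lemma sCoef_succ_mono (hx : OrthonormalBasisVecs x) (hz : OrthonormalBasisVecs z)
    (hU : ∀ i j, U i j = star (x i) ⬝ᵥ z j) {j : ℕ} (hjd : j + 1 ≤ d) :
    sCoef U j ≤ sCoef U (j + 1) := by
  rcases Set.eq_empty_or_nonempty (sSet U j) with he | hne
  · rw [sCoef_eq, he, Real.sSup_empty]; exact sCoef_nonneg hx hz hU _
  · apply csSup_le hne
    rintro r ⟨R, C, hR, hC, hcard, rfl⟩
    have hClt := hC.card_pos
    have hRle : R.card ≤ Finset.univ.card := Finset.card_le_card (Finset.subset_univ R)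
    rw [Finset.card_univ, Fintype.card_fin] at hRle
    have hRlt : R.card < d := by omega
    have hcompl : Rᶜ.Nonempty := by
      rw [← Finset.card_pos, Finset.card_compl, Fintype.card_fin]
      omega
    obtain ⟨a, ha⟩ := hcompl
    rw [Finset.mem_compl] at ha
    calc opNorm (U.submatrix (fun i : {i // i ∈ R} => (i : Fin d))
            (fun j : {j // j ∈ C} => (j : Fin d)))
        ≤ opNorm (U.submatrix (fun i : {i // i ∈ insert a R} => (i : Fin d))
            (fun j : {j // j ∈ C} => (j : Fin d))) :=
          opNorm_submatrix_mono U C (Finset.subset_insert a R)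
      _ ≤ sCoef U (j + 1) := by
          apply opNorm_submatrix_le_sCoef hx hz hU (Finset.insert_nonempty a R) hC
          rw [Finset.card_insert_of_notMem ha]
          omega

lemma sCoef_mono (hx : OrthonormalBasisVecs x) (hz : OrthonormalBasisVecs z)
    (hU : ∀ i j, U i j = star (x i) ⬝ᵥ z j) {j k : ℕ} (hjk : j ≤ k) (hkd : k ≤ d) :
    sCoef U j ≤ sCoef U k := by
  induction k, hjk using Nat.le_induction with
  | base => exact le_rfl
  | succ n hn ih =>
    calc sCoef U j ≤ sCoef U n := ih (by omega)
      _ ≤ sCoef U (n + 1) := sCoef_succ_mono hx hz hU (by omega)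

lemma sCoef_d_eq_one (hx : OrthonormalBasisVecs x) (hz : OrthonormalBasisVecs z)
    (hU : ∀ i j, U i j = star (x i) ⬝ᵥ z j) (hd : 0 < d) : sCoef U d = 1 := by
  refine le_antisymm (sCoef_le_one hx hz hU d) ?_
  set j0 : Fin d := ⟨0, hd⟩ with hj0
  set N := U.submatrix (fun i : {i // i ∈ (Finset.univ : Finset (Fin d))} => (i : Fin d))
      (fun j : {j // j ∈ ({j0} : Finset (Fin d))} => (j : Fin d)) with hN
  set v : {j // j ∈ ({j0} : Finset (Fin d))} → ℂ := fun _ => 1 with hv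
  have hvn : (star v ⬝ᵥ v).re = 1 := by
    rw [re_dot_self]
    rw [Finset.sum_coe_sort ({j0} : Finset (Fin d)) (fun _ => Complex.normSq (1:ℂ))]
    simp
  have hNvEntry : ∀ i : {i // i ∈ (Finset.univ : Finset (Fin d))}, (N *ᵥ v) i = U (i : Fin d) j0 := by
    intro i
    rw [hN, hv]
    simp only [mulVec, dotProduct, submatrix_apply, mul_one]
    rw [Finset.sum_coe_sort ({j0} : Finset (Fin d)) (fun j => U (i : Fin d) j)]
    exact Finset.sum_singleton _ _
  have hNv : (star (N *ᵥ v) ⬝ᵥ (N *ᵥ v)).re = 1 := by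
    rw [re_dot_self]
    have h1 : ∑ i : {i // i ∈ (Finset.univ : Finset (Fin d))}, Complex.normSq ((N *ᵥ v) i)
        = ∑ i : {i // i ∈ (Finset.univ : Finset (Fin d))}, Complex.normSq (U (i : Fin d) j0) :=
      Finset.sum_congr rfl fun i _ => by rw [hNvEntry i]
    rw [h1, Finset.sum_coe_sort (Finset.univ : Finset (Fin d)) (fun i => Complex.normSq (U i j0))]
    have h2 : ∀ i, Complex.normSq (U i j0) = Complex.normSq (star (x i) ⬝ᵥ z j0) := by
      intro i; rw [hU]
    rw [Finset.sum_congr rfl fun i _ => h2 i]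
    rw [sum_normSq_eq hx (z j0)]
    rw [hz j0 j0, if_pos rfl]
    rfl
  have heuv : ‖eu v‖ = 1 := by
    have := norm_eu_sq v
    rw [hvn] at this
    nlinarith [norm_nonneg (eu v)]
  have heuNv : ‖eu (N *ᵥ v)‖ = 1 := by
    have := norm_eu_sq (N *ᵥ v)
    rw [hNv] at this
    nlinarith [norm_nonneg (eu (N *ᵥ v))]
  have hle := opNorm_mulVec_le N v
  rw [heuv, heuNv, mul_one] at hle
  calc (1:ℝ) ≤ opNorm N := hle
    _ ≤ sCoef U d := by
        apply opNorm_submatrix_le_sCoef hx hz hU ⟨j0, Finset.mem_univ j0⟩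
          (Finset.singleton_nonempty j0)
        rw [Finset.card_univ, Fintype.card_fin, Finset.card_singleton]

/-! ### omegaDS sums -/

def omF (U : Matrix (Fin d) (Fin d) ℂ) : ℕ → ℝ := fun n =>
  if n = 0 then 1 else if n ≤ d then sCoef U n - sCoef U (n - 1) else 0

lemma omegaDS_eq_omF (i : Fin (2 * d)) : omegaDS U i = omF U (i : ℕ) := rfl

lemma sum_omF_range (hx : OrthonormalBasisVecs x) (hz : OrthonormalBasisVecs z)
    (hU : ∀ i j, U i j = star (x i) ⬝ᵥ z j) {k : ℕ} (hk1 : 1 ≤ k) (hkd : k ≤ d + 1) :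
    ∑ m ∈ Finset.range k, omF U m = 1 + sCoef U (k - 1) := by
  have hk : k = (k - 1) + 1 := by omega
  conv_lhs => rw [hk, Finset.sum_range_succ']
  have h1 : ∀ i ∈ Finset.range (k - 1), omF U (i + 1) = sCoef U (i + 1) - sCoef U i := by
    intro i hi
    rw [Finset.mem_range] at hi
    unfold omF
    rw [if_neg (by omega), if_pos (by omega)]
    congr 1
  rw [Finset.sum_congr rfl h1, Finset.sum_range_sub (fun n => sCoef U n) (k - 1)]
  unfold omF
  rw [if_pos rfl, sCoef_zero]
  ring

lemma topSum_omega_ge (hx : OrthonormalBasisVecs x) (hz : OrthonormalBasisVecs z)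
    (hU : ∀ i j, U i j = star (x i) ⬝ᵥ z j) (hd : 0 < d) {k : ℕ} (hk1 : 1 ≤ k)
    (hkd : k ≤ d + 1) : 1 + sCoef U (k - 1) ≤ topSum (omegaDS U) k := by
  have hbound : ∀ m ∈ Finset.range k, m < 2 * d := by
    intro m hm
    rw [Finset.mem_range] at hm
    omega
  set T : Finset (Fin (2 * d)) := (Finset.range k).attachFin hbound with hT
  have hcard : T.card = k := by rw [hT, Finset.card_attachFin, Finset.card_range]
  have hsum : ∑ i ∈ T, omegaDS U i = ∑ m ∈ Finset.range k, omF U m := by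
    rw [hT]
    rw [← sum_attachFin (Finset.range k) hbound (omF U)]
    exact Finset.sum_congr rfl fun i _ => omegaDS_eq_omF i
  calc 1 + sCoef U (k - 1) = ∑ i ∈ T, omegaDS U i := by
        rw [hsum, sum_omF_range hx hz hU hk1 hkd]
    _ ≤ topSum (omegaDS U) k := le_topSum _ (le_of_eq hcard)

lemma sum_omegaDS (hx : OrthonormalBasisVecs x) (hz : OrthonormalBasisVecs z)
    (hU : ∀ i j, U i j = star (x i) ⬝ᵥ z j) (hd : 0 < d) :
    ∑ i, omegaDS U i = 2 := by
  have h0 : ∑ i : Fin (2 * d), omegaDS U i = ∑ m ∈ Finset.range (2 * d), omF U m := by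
    rw [← Fin.sum_univ_eq_sum_range (omF U) (2 * d)]
    exact Finset.sum_congr rfl fun i _ => omegaDS_eq_omF i
  rw [h0]
  have h1 : ∑ m ∈ Finset.range (2 * d), omF U m = ∑ m ∈ Finset.range (d + 1), omF U m := by
    symm
    apply Finset.sum_subset (Finset.range_subset_range.mpr (by omega))
    intro m hm hnm
    rw [Finset.mem_range] at hm
    rw [Finset.mem_range, not_lt] at hnm
    unfold omF
    rw [if_neg (by omega), if_neg (by omega)]
  rw [h1, sum_omF_range hx hz hU (by omega) (by omega)]
  simp only [Nat.add_sub_cancel]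
  rw [sCoef_d_eq_one hx hz hU hd]
  norm_num

end SCoef
end Aux

/-- direct-sum majorization uncertainty relation (Rudnicki–Puchała–Życzkowski):
for any density matrix `ρ`, `p(x|ρ) ⊕ p(z|ρ) ≺ ω^{X⊕Z}`. -/
theorem direct_sum_majorization_uncertainty {d : ℕ} (x z : Fin d → Fin d → ℂ)
    (hx : OrthonormalBasisVecs x) (hz : OrthonormalBasisVecs z)
    (U : Matrix (Fin d) (Fin d) ℂ) (hU : ∀ i j, U i j = star (x i) ⬝ᵥ z j)
    (ρ : Matrix (Fin d) (Fin d) ℂ) (hρ : IsDensityMatrix ρ) :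
    Majorizes (Sum.elim (measDist x ρ) (measDist z ρ)) (omegaDS U) := by
  classical
  obtain ⟨hpsd, htr⟩ := hρ
  rcases Nat.eq_zero_or_pos d with hd0 | hd
  · exfalso
    subst hd0
    rw [Matrix.trace] at htr
    simp at htr
  -- nonnegativity of measurement distributions
  have hpx : ∀ i, 0 ≤ measDist x ρ i := by
    intro i
    have h := hpsd.dotProduct_mulVec_nonneg (x i)
    exact (Complex.le_def.mp h).1
  have hpz : ∀ j, 0 ≤ measDist z ρ j := by
    intro j
    have h := hpsd.dotProduct_mulVec_nonneg (z j)
    exact (Complex.le_def.mp h).1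
  -- total sums
  have hsx : ∑ i, measDist x ρ i = 1 := by
    unfold measDist
    rw [← Complex.re_sum, Aux.sum_dot_eq_trace hx ρ, htr]
    rfl
  have hsz : ∑ j, measDist z ρ j = 1 := by
    unfold measDist
    rw [← Complex.re_sum, Aux.sum_dot_eq_trace hz ρ, htr]
    rfl
  -- decomposition of subset sums
  have hsplit : ∀ s : Finset (Fin d ⊕ Fin d),
      ∑ i ∈ s, Sum.elim (measDist x ρ) (measDist z ρ) i
        = (∑ i ∈ s.toLeft, measDist x ρ i) + (∑ j ∈ s.toRight, measDist z ρ j) := by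
    intro s
    conv_lhs => rw [← Finset.toLeft_disjSum_toRight (u := s)]
    rw [Finset.sum_sumElim]
  have hsub1 : ∀ (A : Finset (Fin d)), ∑ i ∈ A, measDist x ρ i ≤ 1 := by
    intro A
    rw [← hsx]
    exact Finset.sum_le_sum_of_subset_of_nonneg (Finset.subset_univ A)
      (fun i _ _ => hpx i)
  have hsub2 : ∀ (B : Finset (Fin d)), ∑ j ∈ B, measDist z ρ j ≤ 1 := by
    intro B
    rw [← hsz]
    exact Finset.sum_le_sum_of_subset_of_nonneg (Finset.subset_univ B)
      (fun j _ _ => hpz j)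
  -- the central bound on subsets
  have hcentral : ∀ (k : ℕ), 1 ≤ k → k ≤ d + 1 → ∀ s : Finset (Fin d ⊕ Fin d), s.card ≤ k →
      ∑ i ∈ s, Sum.elim (measDist x ρ) (measDist z ρ) i ≤ 1 + sCoef U (k - 1) := by
    intro k hk1 hkd s hs
    have hsc0 : 0 ≤ sCoef U (k - 1) := Aux.sCoef_nonneg hx hz hU (k - 1)
    rw [hsplit s]
    rcases Finset.eq_empty_or_nonempty s.toLeft with hA | hA
    · rw [hA, Finset.sum_empty, zero_add]
      linarith [hsub2 s.toRight]
    rcases Finset.eq_empty_or_nonempty s.toRight with hB | hB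
    · rw [hB, Finset.sum_empty, add_zero]
      linarith [hsub1 s.toLeft]
    have hm : s.toLeft.card + s.toRight.card = s.card := Finset.card_toLeft_add_card_toRight
    have hkey := Aux.key_bound hx hz hU hpsd htr s.toLeft s.toRight
    have hop : opNorm (U.submatrix (fun i : {i // i ∈ s.toLeft} => (i : Fin d))
          (fun j : {j // j ∈ s.toRight} => (j : Fin d)))
        ≤ sCoef U (s.toLeft.card + s.toRight.card - 1) := by
      apply Aux.opNorm_submatrix_le_sCoef hx hz hU hA hB
      have h1 := hA.card_pos
      have h2 := hB.card_pos
      omega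
    have hmono : sCoef U (s.toLeft.card + s.toRight.card - 1) ≤ sCoef U (k - 1) := by
      apply Aux.sCoef_mono hx hz hU
      · have h1 := hA.card_pos
        have h2 := hB.card_pos
        omega
      · omega
    calc (∑ i ∈ s.toLeft, measDist x ρ i) + (∑ j ∈ s.toRight, measDist z ρ j)
        ≤ 1 + opNorm (U.submatrix (fun i : {i // i ∈ s.toLeft} => (i : Fin d))
            (fun j : {j // j ∈ s.toRight} => (j : Fin d))) := hkey
      _ ≤ 1 + sCoef U (k - 1) := by linarith
  constructor
  · intro k
    rcases Nat.eq_zero_or_pos k with hk0 | hk1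
    · subst hk0
      have h1 : topSum (Sum.elim (measDist x ρ) (measDist z ρ)) 0 ≤ 0 := by
        apply Aux.topSum_le _ le_rfl
        intro s hs
        have : s = ∅ := Finset.card_eq_zero.mp (Nat.le_zero.mp hs)
        simp [this]
      linarith [Aux.topSum_nonneg (omegaDS U) 0]
    by_cases hkd : k ≤ d + 1
    · have hub : topSum (Sum.elim (measDist x ρ) (measDist z ρ)) k ≤ 1 + sCoef U (k - 1) := by
        apply Aux.topSum_le _ (by linarith [Aux.sCoef_nonneg hx hz hU (k-1)])
        exact hcentral k hk1 hkd
      have hlb := Aux.topSum_omega_ge hx hz hU hd hk1 hkd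
      linarith
    · push_neg at hkd
      have hub : topSum (Sum.elim (measDist x ρ) (measDist z ρ)) k ≤ 2 := by
        apply Aux.topSum_le _ (by norm_num)
        intro s hs
        rw [hsplit s]
        linarith [hsub1 s.toLeft, hsub2 s.toRight]
      have hlb : (2:ℝ) ≤ topSum (omegaDS U) k := by
        have h1 := Aux.topSum_omega_ge hx hz hU hd (k := d + 1) (by omega) le_rfl
        have h2 : sCoef U (d + 1 - 1) = 1 := by
          simp only [Nat.add_sub_cancel]
          exact Aux.sCoef_d_eq_one hx hz hU hd
        rw [h2] at h1
        have h3 := Aux.topSum_mono (omegaDS U) (le_of_lt hkd)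
        linarith
      linarith
  · rw [Fintype.sum_sum_type]
    have e1 : ∀ a : Fin d, Sum.elim (measDist x ρ) (measDist z ρ) (Sum.inl a) = measDist x ρ a :=
      fun a => rfl
    have e2 : ∀ b : Fin d, Sum.elim (measDist x ρ) (measDist z ρ) (Sum.inr b) = measDist z ρ b :=
      fun b => rfl
    rw [Finset.sum_congr rfl fun a _ => e1 a, Finset.sum_congr rfl fun b _ => e2 b]
    rw [hsx, hsz, Aux.sum_omegaDS hx hz hU hd]
    norm_num


end
end

section
/- Let {x_1,…,x_d} and {z_1,…,z_d} be two orthonormal bases of ℂ^d with overlapping matrix U and coefficients s_1,…,s_d. Then for every density matrix ρ on ℂ^d, every k ∈ {1,…,d}, and all subsets I, J ⊆ {1,…,d} with |I| + |J| = k + 1, one has Σ_{i∈I} ⟨x_i, ρ x_i⟩ + Σ_{j∈J} ⟨z_j, ρ z_j⟩ ≤ 1 + s_k. -/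
open Matrix
open scoped Kronecker ComplexOrder

noncomputable section

namespace DSAux

variable {d : ℕ}

def nsq {n : Type*} [Fintype n] (v : n → ℂ) : ℝ := ∑ i, Complex.normSq (v i)

lemma nsq_nonneg {n : Type*} [Fintype n] (v : n → ℂ) : 0 ≤ nsq v :=
  Finset.sum_nonneg fun _ _ => Complex.normSq_nonneg _

lemma star_dot_self {n : Type*} [Fintype n] (v : n → ℂ) :
    star v ⬝ᵥ v = (nsq v : ℂ) := by
  simp [dotProduct, nsq, Complex.normSq_eq_conj_mul_self]

lemma nsq_eq_zero_iff {n : Type*} [Fintype n] {v : n → ℂ} : nsq v = 0 ↔ v = 0 := by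
  constructor
  · intro h
    funext i
    have := (Finset.sum_eq_zero_iff_of_nonneg (fun i _ => Complex.normSq_nonneg (v i))).mp h i
      (Finset.mem_univ i)
    simpa using this
  · rintro rfl; simp [nsq]

lemma nsq_smul {n : Type*} [Fintype n] (a : ℂ) (v : n → ℂ) :
    nsq (a • v) = Complex.normSq a * nsq v := by
  simp [nsq, Complex.normSq_mul, Finset.mul_sum]

lemma nsq_coe {n : Type*} [Fintype n] (v : EuclideanSpace ℂ n) : nsq ⇑v = ‖v‖ ^ 2 := by
  rw [EuclideanSpace.norm_eq, Real.sq_sqrt (by positivity)]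
  simp [nsq, Complex.sq_norm]

lemma nsq_symm_equiv {n : Type*} [Fintype n] (v : n → ℂ) :
    nsq v = ‖(WithLp.equiv 2 (n → ℂ)).symm v‖ ^ 2 := by
  rw [← nsq_coe]; rfl

lemma nsq_mulVec_le {m n : Type*} [Fintype m] [Fintype n] [DecidableEq n]
    (M : Matrix m n ℂ) (v : n → ℂ) : nsq (M *ᵥ v) ≤ opNorm M ^ 2 * nsq v := by
  have h := (LinearMap.toContinuousLinearMap (Matrix.toEuclideanLin M)).le_opNorm
      ((WithLp.equiv 2 (n → ℂ)).symm v)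
  have happ : (LinearMap.toContinuousLinearMap (Matrix.toEuclideanLin M))
      ((WithLp.equiv 2 (n → ℂ)).symm v) = (WithLp.equiv 2 (m → ℂ)).symm (M *ᵥ v) := by
    simp
  rw [happ] at h
  have h2 := pow_le_pow_left₀ (norm_nonneg _) h 2
  rw [mul_pow] at h2
  calc nsq (M *ᵥ v) = ‖(WithLp.equiv 2 (m → ℂ)).symm (M *ᵥ v)‖ ^ 2 := nsq_symm_equiv _
    _ ≤ opNorm M ^ 2 * ‖(WithLp.equiv 2 (n → ℂ)).symm v‖ ^ 2 := h2
    _ = opNorm M ^ 2 * nsq v := by rw [← nsq_symm_equiv]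

lemma opNorm_nonneg {m n : Type*} [Fintype m] [Fintype n] [DecidableEq n]
    (M : Matrix m n ℂ) : 0 ≤ opNorm M := norm_nonneg _

lemma opNorm_conjTranspose {m n : Type*} [Fintype m] [Fintype n] [DecidableEq m] [DecidableEq n]
    (M : Matrix m n ℂ) : opNorm Mᴴ = opNorm M := by
  unfold opNorm
  rw [Matrix.toEuclideanLin_conjTranspose_eq_adjoint, LinearMap.adjoint_toContinuousLinearMap]
  exact ContinuousLinearMap.adjoint.norm_map _

/-- the projector onto the span of the (orthonormal) `x i`, `i ∈ I` -/
def proj (x : Fin d → Fin d → ℂ) (I : Finset (Fin d)) : Matrix (Fin d) (Fin d) ℂ :=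
  ∑ i ∈ I, vecMulVec (x i) (star (x i))

lemma vecMulVec_mul_vecMulVec {n : Type*} [Fintype n] (a b c e : n → ℂ) :
    vecMulVec a b * vecMulVec c e = (b ⬝ᵥ c) • vecMulVec a e := by
  ext i j
  simp only [Matrix.mul_apply, vecMulVec_apply, Matrix.smul_apply, dotProduct, Finset.sum_mul,
    smul_eq_mul, Finset.mul_sum]
  exact Finset.sum_congr rfl fun k _ => by ring

lemma sum_dot {ι : Type*} {n : Type*} [Fintype n] (s : Finset ι) (f : ι → n → ℂ) (v : n → ℂ) :
    (∑ i ∈ s, f i) ⬝ᵥ v = ∑ i ∈ s, f i ⬝ᵥ v := by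
  simp only [dotProduct, Finset.sum_apply, Finset.sum_mul]
  rw [Finset.sum_comm]

lemma dot_sum {ι : Type*} {n : Type*} [Fintype n] (s : Finset ι) (v : n → ℂ) (f : ι → n → ℂ) :
    v ⬝ᵥ (∑ i ∈ s, f i) = ∑ i ∈ s, v ⬝ᵥ f i := by
  simp only [dotProduct, Finset.sum_apply, Finset.mul_sum]
  rw [Finset.sum_comm]

lemma sum_mulVec' {ι : Type*} (s : Finset ι) (f : ι → Matrix (Fin d) (Fin d) ℂ) (v : Fin d → ℂ) :
    (∑ i ∈ s, f i) *ᵥ v = ∑ i ∈ s, f i *ᵥ v := by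
  ext a
  simp only [mulVec, dotProduct, Matrix.sum_apply, Finset.sum_apply, Finset.sum_mul]
  rw [Finset.sum_comm]

lemma vecMulVec_mulVec {n : Type*} [Fintype n] (a b v : n → ℂ) :
    vecMulVec a b *ᵥ v = (b ⬝ᵥ v) • a := by
  ext i
  simp only [vecMulVec_apply, mulVec, dotProduct, Pi.smul_apply, smul_eq_mul, Finset.sum_mul]
  exact Finset.sum_congr rfl fun k _ => by ring

lemma proj_mul_proj (x : Fin d → Fin d → ℂ) (hx : OrthonormalBasisVecs x)
    (I : Finset (Fin d)) : proj x I * proj x I = proj x I := by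
  unfold proj
  rw [Finset.sum_mul_sum]
  have : ∀ i ∈ I, ∀ j ∈ I, vecMulVec (x i) (star (x i)) * vecMulVec (x j) (star (x j)) =
      if i = j then vecMulVec (x i) (star (x j)) else 0 := by
    intro i _ j _
    rw [vecMulVec_mul_vecMulVec, hx i j]
    split <;> simp
  calc (∑ i ∈ I, ∑ j ∈ I, vecMulVec (x i) (star (x i)) * vecMulVec (x j) (star (x j)))
      = ∑ i ∈ I, ∑ j ∈ I, if i = j then vecMulVec (x i) (star (x j)) else 0 :=
        Finset.sum_congr rfl fun i hi => Finset.sum_congr rfl fun j hj => this i hi j hj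
    _ = proj x I := by
        unfold proj
        exact Finset.sum_congr rfl fun i hi => by rw [Finset.sum_ite_eq, if_pos hi]

lemma proj_isHermitian (x : Fin d → Fin d → ℂ) (I : Finset (Fin d)) :
    (proj x I).IsHermitian := by
  unfold proj Matrix.IsHermitian
  rw [conjTranspose_sum]
  refine Finset.sum_congr rfl fun i _ => ?_
  ext a b
  simp [vecMulVec_apply, conjTranspose_apply, mul_comm]

lemma trace_mul_vecMulVec (ρ : Matrix (Fin d) (Fin d) ℂ) (u : Fin d → ℂ) :
    (ρ * vecMulVec u (star u)).trace = star u ⬝ᵥ (ρ *ᵥ u) := by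
  simp only [Matrix.trace, Matrix.diag_apply, Matrix.mul_apply, vecMulVec_apply, dotProduct,
    mulVec, Pi.star_apply, Finset.mul_sum]
  exact Finset.sum_congr rfl fun a _ => Finset.sum_congr rfl fun b _ => by ring

/-- Parseval -/
lemma sum_normSq_dot_eq (z : Fin d → Fin d → ℂ) (hz : OrthonormalBasisVecs z)
    (v : Fin d → ℂ) : ∑ j, Complex.normSq (star (z j) ⬝ᵥ v) = nsq v := by
  classical
  set Zc : Matrix (Fin d) (Fin d) ℂ := Matrix.of fun j a => star (z j) a with hZc
  have hZZ : Zc * Zcᴴ = 1 := by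
    ext i j
    have h := hz i j
    simp only [dotProduct, Pi.star_apply] at h
    simp only [Matrix.mul_apply, conjTranspose_apply, hZc, Matrix.of_apply, Matrix.one_apply,
      Pi.star_apply, star_star]
    simpa using h
  have hone : Zcᴴ * Zc = 1 := mul_eq_one_comm.mp hZZ
  have key : star (Zc *ᵥ v) ⬝ᵥ (Zc *ᵥ v) = star v ⬝ᵥ v := by
    rw [star_mulVec, dotProduct_mulVec, vecMul_vecMul, hone, vecMul_one]
  have h1 : nsq (Zc *ᵥ v) = nsq v := by
    have := (star_dot_self (Zc *ᵥ v)).symm.trans (key.trans (star_dot_self v))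
    exact_mod_cast this
  have h2 : nsq (Zc *ᵥ v) = ∑ j, Complex.normSq (star (z j) ⬝ᵥ v) := by
    simp [nsq, hZc, mulVec, dotProduct]
  rw [← h2, h1]

lemma nsq_sum_smul (x : Fin d → Fin d → ℂ) (hx : OrthonormalBasisVecs x)
    (I : Finset (Fin d)) (a : Fin d → ℂ) :
    nsq (∑ i ∈ I, a i • x i) = ∑ i ∈ I, Complex.normSq (a i) := by
  have key : star (∑ i ∈ I, a i • x i) ⬝ᵥ (∑ i ∈ I, a i • x i) =
      ((∑ i ∈ I, Complex.normSq (a i) : ℝ) : ℂ) := by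
    rw [star_sum, sum_dot]
    push_cast
    refine Finset.sum_congr rfl fun i hi => ?_
    rw [dot_sum]
    have : ∀ j ∈ I, star (a i • x i) ⬝ᵥ (a j • x j) =
        if i = j then ((Complex.normSq (a i) : ℂ)) else 0 := by
      intro j _
      rw [star_smul, smul_dotProduct, dotProduct_smul, hx i j]
      split
      · next h => subst h; simp [Complex.normSq_eq_conj_mul_self, mul_comm]
      · simp
    rw [Finset.sum_congr rfl this, Finset.sum_ite_eq, if_pos hi]
  have := (star_dot_self _).symm.trans key
  exact_mod_cast this

lemma proj_mul_proj' (x z : Fin d → Fin d → ℂ) (I J : Finset (Fin d)) :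
    proj x I * proj z J =
      ∑ i ∈ I, ∑ j ∈ J, (star (x i) ⬝ᵥ z j) • vecMulVec (x i) (star (z j)) := by
  unfold proj
  rw [Finset.sum_mul_sum]
  exact Finset.sum_congr rfl fun i _ => Finset.sum_congr rfl fun j _ =>
    vecMulVec_mul_vecMulVec _ _ _ _

lemma projmul_mulVec (x z : Fin d → Fin d → ℂ) (I J : Finset (Fin d)) (v : Fin d → ℂ) :
    (proj x I * proj z J) *ᵥ v =
      ∑ i ∈ I, (∑ j ∈ J, (star (x i) ⬝ᵥ z j) * (star (z j) ⬝ᵥ v)) • x i := by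
  rw [proj_mul_proj', sum_mulVec']
  refine Finset.sum_congr rfl fun i _ => ?_
  rw [sum_mulVec', Finset.sum_smul]
  refine Finset.sum_congr rfl fun j _ => ?_
  rw [Matrix.smul_mulVec, vecMulVec_mulVec, smul_smul]

lemma nsq_projmul_le (x z : Fin d → Fin d → ℂ) (hx : OrthonormalBasisVecs x)
    (hz : OrthonormalBasisVecs z)
    (U : Matrix (Fin d) (Fin d) ℂ) (hU : ∀ i j, U i j = star (x i) ⬝ᵥ z j)
    (I J : Finset (Fin d)) (v : Fin d → ℂ) :
    nsq ((proj x I * proj z J) *ᵥ v) ≤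
      opNorm (U.submatrix (fun i : {i // i ∈ I} => (i : Fin d))
        (fun j : {j // j ∈ J} => (j : Fin d))) ^ 2 * nsq v := by
  classical
  set M := U.submatrix (fun i : {i // i ∈ I} => (i : Fin d))
        (fun j : {j // j ∈ J} => (j : Fin d)) with hM
  set c : Fin d → ℂ := fun j => star (z j) ⬝ᵥ v with hc
  set a : Fin d → ℂ := fun i => ∑ j ∈ J, U i j * c j with ha
  have h1 : (proj x I * proj z J) *ᵥ v = ∑ i ∈ I, a i • x i := by
    rw [projmul_mulVec]
    exact Finset.sum_congr rfl fun i _ => by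
      congr 1
      exact Finset.sum_congr rfl fun j _ => by rw [hU]
  rw [h1, nsq_sum_smul x hx]
  set c' : {j // j ∈ J} → ℂ := fun j => c j.1 with hc'
  have h2 : ∑ i ∈ I, Complex.normSq (a i) = nsq (M *ᵥ c') := by
    rw [nsq, ← Finset.sum_coe_sort I]
    refine Finset.sum_congr rfl fun i _ => ?_
    congr 1
    show a i.1 = ∑ j : {j // j ∈ J}, M i j * c' j
    rw [ha]
    simp only [hM, submatrix_apply, hc']
    exact (Finset.sum_coe_sort J (fun j => U i.1 j * c j)).symm
  rw [h2]
  calc nsq (M *ᵥ c') ≤ opNorm M ^ 2 * nsq c' := nsq_mulVec_le _ _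
    _ ≤ opNorm M ^ 2 * nsq v := by
        refine mul_le_mul_of_nonneg_left ?_ (by positivity)
        have : nsq c' = ∑ j ∈ J, Complex.normSq (c j) := by
          rw [nsq]; exact Finset.sum_coe_sort J (fun j => Complex.normSq (c j))
        rw [this, ← sum_normSq_dot_eq z hz v]
        exact Finset.sum_le_sum_of_subset_of_nonneg (Finset.subset_univ J)
          (fun _ _ _ => Complex.normSq_nonneg _)

/-- eigenvalue bound for a sum of two projections -/
lemma eigen_bound (P Q : Matrix (Fin d) (Fin d) ℂ) (hP : P * P = P) (hQ : Q * Q = Q)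
    (c : ℝ) (hc : 0 ≤ c)
    (hPQ : ∀ v, nsq ((P * Q) *ᵥ v) ≤ c ^ 2 * nsq v)
    (hQP : ∀ v, nsq ((Q * P) *ᵥ v) ≤ c ^ 2 * nsq v)
    (μ : ℝ) (u : Fin d → ℂ) (hu : nsq u ≠ 0)
    (heig : (P + Q) *ᵥ u = ((μ : ℂ)) • u) : μ ≤ 1 + c := by
  have h1 : (P * Q) *ᵥ u = ((μ : ℂ) - 1) • (P *ᵥ u) := by
    have e : P *ᵥ ((P + Q) *ᵥ u) = P *ᵥ (((μ : ℂ)) • u) := by rw [heig]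
    rw [mulVec_mulVec, Matrix.mul_add, hP, mulVec_smul] at e
    rw [Matrix.add_mulVec] at e
    rw [sub_smul, one_smul]
    linear_combination (norm := module) e
  have h2 : (Q * P) *ᵥ u = ((μ : ℂ) - 1) • (Q *ᵥ u) := by
    have e : Q *ᵥ ((P + Q) *ᵥ u) = Q *ᵥ (((μ : ℂ)) • u) := by rw [heig]
    rw [mulVec_mulVec, Matrix.mul_add, hQ, mulVec_smul, Matrix.add_mulVec] at e
    rw [sub_smul, one_smul]
    linear_combination (norm := module) e
  have h3 : (P * Q) *ᵥ (Q *ᵥ u) = ((μ : ℂ) - 1) • (P *ᵥ u) := by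
    rw [mulVec_mulVec, Matrix.mul_assoc, hQ, ← h1]
  have h4 : (Q * P) *ᵥ (P *ᵥ u) = ((μ : ℂ) - 1) • (Q *ᵥ u) := by
    rw [mulVec_mulVec, Matrix.mul_assoc, hP, ← h2]
  have hnorm : Complex.normSq ((μ : ℂ) - 1) = (μ - 1) ^ 2 := by
    rw [show ((μ : ℂ) - 1) = ((μ - 1 : ℝ) : ℂ) by push_cast; ring, Complex.normSq_ofReal, sq]
  set a := nsq (P *ᵥ u) with ha
  set b := nsq (Q *ᵥ u) with hb
  have i1 : (μ - 1) ^ 2 * a ≤ c ^ 2 * b := by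
    have := hPQ (Q *ᵥ u); rw [h3, nsq_smul, hnorm] at this; exact this
  have i2 : (μ - 1) ^ 2 * b ≤ c ^ 2 * a := by
    have := hQP (P *ᵥ u); rw [h4, nsq_smul, hnorm] at this; exact this
  by_cases hab : a + b = 0
  · have ha0 : a = 0 := le_antisymm (by linarith [nsq_nonneg (Q *ᵥ u)]) (nsq_nonneg _)
    have hb0 : b = 0 := by linarith
    have hP0 : P *ᵥ u = 0 := nsq_eq_zero_iff.mp ha0
    have hQ0 : Q *ᵥ u = 0 := nsq_eq_zero_iff.mp hb0
    have h0 : ((μ : ℂ)) • u = 0 := by rw [← heig, Matrix.add_mulVec, hP0, hQ0, add_zero]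
    have hμ0 : μ = 0 := by
      by_contra hne
      have hu0 : u = 0 := by
        rcases smul_eq_zero.mp h0 with h | h
        · exact absurd (by exact_mod_cast h) hne
        · exact h
      exact hu (by rw [hu0]; exact nsq_eq_zero_iff.mpr rfl)
    linarith
  · have hab' : 0 < a + b :=
      lt_of_le_of_ne (add_nonneg (nsq_nonneg _) (nsq_nonneg _)) (Ne.symm hab)
    have hmul : (μ - 1) ^ 2 * (a + b) ≤ c ^ 2 * (a + b) := by
      ring_nf; ring_nf at i1 i2; linarith
    have h5 : (μ - 1) ^ 2 ≤ c ^ 2 := le_of_mul_le_mul_right (by linarith [hmul]) hab'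
    nlinarith

lemma trace_bound (A ρ : Matrix (Fin d) (Fin d) ℂ) (hA : A.IsHermitian)
    (hρ : IsDensityMatrix ρ) (c : ℝ)
    (hμ : ∀ m, hA.eigenvalues m ≤ 1 + c) : (Matrix.trace (ρ * A)).re ≤ 1 + c := by
  classical
  set V : Matrix (Fin d) (Fin d) ℂ :=
    (Matrix.IsHermitian.eigenvectorUnitary hA : Matrix (Fin d) (Fin d) ℂ) with hV
  have hVV : V * star V = 1 :=
    (Matrix.mem_unitaryGroup_iff).mp (Matrix.IsHermitian.eigenvectorUnitary hA).2
  have hVV' : star V * V = 1 := mul_eq_one_comm.mp hVV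
  set D : Matrix (Fin d) (Fin d) ℂ := Matrix.diagonal (RCLike.ofReal ∘ hA.eigenvalues) with hD
  have hspec : A = V * D * star V := Matrix.IsHermitian.spectral_theorem hA
  set σ : Matrix (Fin d) (Fin d) ℂ := star V * ρ * V with hσ
  have htr : Matrix.trace (ρ * A) = Matrix.trace (σ * D) := by
    rw [hspec, hσ]
    rw [show ρ * (V * D * star V) = ρ * V * D * star V by simp only [Matrix.mul_assoc]]
    rw [Matrix.trace_mul_cycle]
    simp only [Matrix.mul_assoc]
  have hσpsd : σ.PosSemidef := by
    have := hρ.1.conjTranspose_mul_mul_same V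
    simpa [hσ, Matrix.star_eq_conjTranspose] using this
  have hσtr : Matrix.trace σ = 1 := by
    rw [hσ, Matrix.trace_mul_cycle, hVV, Matrix.one_mul, hρ.2]
  have hdiag : ∀ m, 0 ≤ (σ m m).re := by
    intro m
    have h := hσpsd.re_dotProduct_nonneg (Pi.single m 1)
    simpa [Matrix.mulVec_single, dotProduct, Pi.single_apply, Finset.sum_ite_eq] using h
  have hsum : ∑ m, (σ m m).re = 1 := by
    have h1 : (Matrix.trace σ).re = 1 := by rw [hσtr]; simp
    rw [← h1, Matrix.trace]
    simp [Matrix.diag]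
  have hexp : (Matrix.trace (σ * D)).re = ∑ m, (σ m m).re * hA.eigenvalues m := by
    rw [Matrix.trace, Complex.re_sum]
    refine Finset.sum_congr rfl fun m _ => ?_
    simp [Matrix.diag, Matrix.mul_diagonal, hD, Complex.mul_re]
  rw [htr, hexp]
  calc ∑ m, (σ m m).re * hA.eigenvalues m ≤ ∑ m, (σ m m).re * (1 + c) :=
        Finset.sum_le_sum fun m _ => mul_le_mul_of_nonneg_left (hμ m) (hdiag m)
    _ = 1 + c := by rw [← Finset.sum_mul, hsum, one_mul]

lemma le_sCoef (U : Matrix (Fin d) (Fin d) ℂ) (k : ℕ)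
    (R C : Finset (Fin d)) (hR : R.Nonempty) (hC : C.Nonempty)
    (hcard : R.card + C.card = k + 1) :
    opNorm (U.submatrix (fun i : {i // i ∈ R} => (i : Fin d))
      (fun j : {j // j ∈ C} => (j : Fin d))) ≤ sCoef U k := by
  set f : Finset (Fin d) × Finset (Fin d) → ℝ := fun p =>
    opNorm (U.submatrix (fun i : {i // i ∈ p.1} => (i : Fin d))
      (fun j : {j // j ∈ p.2} => (j : Fin d))) with hf
  have hbdd : BddAbove { r : ℝ | ∃ R C : Finset (Fin d), R.Nonempty ∧ C.Nonempty ∧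
      R.card + C.card = k + 1 ∧
      r = opNorm (U.submatrix (fun i : {i // i ∈ R} => (i : Fin d))
        (fun j : {j // j ∈ C} => (j : Fin d))) } := by
    refine BddAbove.mono ?_ (Set.finite_range f).bddAbove
    rintro r ⟨R, C, -, -, -, rfl⟩
    exact ⟨(R, C), rfl⟩
  exact le_csSup hbdd ⟨R, C, hR, hC, hcard, rfl⟩

end DSAux


/-- for any density matrix `ρ`, any `k ∈ {1,…,d}`, and subsets `I`, `J` with
`|I| + |J| = k + 1`, the measurement probabilities satisfy
`∑_{i∈I} ⟨x i, ρ x i⟩ + ∑_{j∈J} ⟨z j, ρ z j⟩ ≤ 1 + s_k`. -/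
theorem direct_sum_scalar_uncertainty {d : ℕ} (x z : Fin d → Fin d → ℂ)
    (hx : OrthonormalBasisVecs x) (hz : OrthonormalBasisVecs z)
    (U : Matrix (Fin d) (Fin d) ℂ) (hU : ∀ i j, U i j = star (x i) ⬝ᵥ z j)
    (ρ : Matrix (Fin d) (Fin d) ℂ) (hρ : IsDensityMatrix ρ)
    (k : ℕ) (hk1 : 1 ≤ k) (hkd : k ≤ d)
    (I J : Finset (Fin d)) (hIJ : I.card + J.card = k + 1) :
    ∑ i ∈ I, (star (x i) ⬝ᵥ (ρ *ᵥ x i)).re + ∑ j ∈ J, (star (z j) ⬝ᵥ (ρ *ᵥ z j)).re ≤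
      1 + sCoef U k := by
  classical
  set P := DSAux.proj x I with hPdef
  set Q := DSAux.proj z J with hQdef
  have hd0 : 0 < d := lt_of_lt_of_le hk1 hkd
  have hc0 : 0 ≤ sCoef U k := by
    obtain ⟨C0, -, hC0card⟩ := Finset.exists_subset_card_eq (s := (Finset.univ : Finset (Fin d))) (n := k)
      (by simpa using hkd)
    exact le_trans (DSAux.opNorm_nonneg _)
      (DSAux.le_sCoef U k {⟨0, hd0⟩} C0 (Finset.singleton_nonempty _)
        (Finset.card_pos.mp (by rw [hC0card]; exact hk1))
        (by rw [Finset.card_singleton, hC0card]; omega))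
  have hPP : P * P = P := DSAux.proj_mul_proj x hx I
  have hQQ : Q * Q = Q := DSAux.proj_mul_proj z hz J
  have hPQb : ∀ v, DSAux.nsq ((P * Q) *ᵥ v) ≤ sCoef U k ^ 2 * DSAux.nsq v := by
    intro v
    rcases I.eq_empty_or_nonempty with hI | hI
    · have hP0 : P = 0 := by rw [hPdef, hI]; simp [DSAux.proj]
      rw [hP0, Matrix.zero_mul, Matrix.zero_mulVec,
        DSAux.nsq_eq_zero_iff.mpr (rfl : (0 : Fin d → ℂ) = 0)]
      exact mul_nonneg (sq_nonneg _) (DSAux.nsq_nonneg _)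
    rcases J.eq_empty_or_nonempty with hJ | hJ
    · have hQ0 : Q = 0 := by rw [hQdef, hJ]; simp [DSAux.proj]
      rw [hQ0, Matrix.mul_zero, Matrix.zero_mulVec,
        DSAux.nsq_eq_zero_iff.mpr (rfl : (0 : Fin d → ℂ) = 0)]
      exact mul_nonneg (sq_nonneg _) (DSAux.nsq_nonneg _)
    · have hMle : opNorm (U.submatrix (fun i : {i // i ∈ I} => (i : Fin d))
          (fun j : {j // j ∈ J} => (j : Fin d))) ≤ sCoef U k :=
        DSAux.le_sCoef U k I J hI hJ hIJ
      refine le_trans (DSAux.nsq_projmul_le x z hx hz U hU I J v) ?_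
      exact mul_le_mul_of_nonneg_right
        (pow_le_pow_left₀ (DSAux.opNorm_nonneg _) hMle 2) (DSAux.nsq_nonneg _)
  have hU' : ∀ j i, Uᴴ j i = star (z j) ⬝ᵥ x i := by
    intro j i
    rw [Matrix.conjTranspose_apply, hU]
    simp [dotProduct, star_sum, mul_comm]
  have hQPb : ∀ v, DSAux.nsq ((Q * P) *ᵥ v) ≤ sCoef U k ^ 2 * DSAux.nsq v := by
    intro v
    rcases I.eq_empty_or_nonempty with hI | hI
    · have hP0 : P = 0 := by rw [hPdef, hI]; simp [DSAux.proj]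
      rw [hP0, Matrix.mul_zero, Matrix.zero_mulVec,
        DSAux.nsq_eq_zero_iff.mpr (rfl : (0 : Fin d → ℂ) = 0)]
      exact mul_nonneg (sq_nonneg _) (DSAux.nsq_nonneg _)
    rcases J.eq_empty_or_nonempty with hJ | hJ
    · have hQ0 : Q = 0 := by rw [hQdef, hJ]; simp [DSAux.proj]
      rw [hQ0, Matrix.zero_mul, Matrix.zero_mulVec,
        DSAux.nsq_eq_zero_iff.mpr (rfl : (0 : Fin d → ℂ) = 0)]
      exact mul_nonneg (sq_nonneg _) (DSAux.nsq_nonneg _)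
    · have hMle : opNorm (U.submatrix (fun i : {i // i ∈ I} => (i : Fin d))
          (fun j : {j // j ∈ J} => (j : Fin d))) ≤ sCoef U k :=
        DSAux.le_sCoef U k I J hI hJ hIJ
      refine le_trans (DSAux.nsq_projmul_le z x hz hx Uᴴ hU' J I v) ?_
      have heq : opNorm (Uᴴ.submatrix (fun j : {j // j ∈ J} => (j : Fin d))
          (fun i : {i // i ∈ I} => (i : Fin d)))
          = opNorm (U.submatrix (fun i : {i // i ∈ I} => (i : Fin d))
            (fun j : {j // j ∈ J} => (j : Fin d))) := by
        rw [← Matrix.conjTranspose_submatrix, DSAux.opNorm_conjTranspose]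
      rw [heq]
      exact mul_le_mul_of_nonneg_right
        (pow_le_pow_left₀ (DSAux.opNorm_nonneg _) hMle 2) (DSAux.nsq_nonneg _)
  have hAH : (P + Q).IsHermitian :=
    (DSAux.proj_isHermitian x I).add (DSAux.proj_isHermitian z J)
  have hLHS : ∑ i ∈ I, (star (x i) ⬝ᵥ (ρ *ᵥ x i)).re + ∑ j ∈ J, (star (z j) ⬝ᵥ (ρ *ᵥ z j)).re
      = (Matrix.trace (ρ * (P + Q))).re := by
    rw [Matrix.mul_add, Matrix.trace_add, Complex.add_re]
    congr 1
    · rw [hPdef, DSAux.proj, Finset.mul_sum, Matrix.trace_sum, Complex.re_sum]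
      exact Finset.sum_congr rfl fun i _ => by rw [DSAux.trace_mul_vecMulVec]
    · rw [hQdef, DSAux.proj, Finset.mul_sum, Matrix.trace_sum, Complex.re_sum]
      exact Finset.sum_congr rfl fun j _ => by rw [DSAux.trace_mul_vecMulVec]
  rw [hLHS]
  refine DSAux.trace_bound (P + Q) ρ hAH hρ (sCoef U k) ?_
  intro m
  refine DSAux.eigen_bound P Q hPP hQQ (sCoef U k) hc0 hPQb hQPb _
    ⇑(hAH.eigenvectorBasis m) ?_ ?_
  · rw [DSAux.nsq_coe, hAH.eigenvectorBasis.orthonormal.1 m]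
    norm_num
  · have h := hAH.mulVec_eigenvectorBasis m
    rw [h]
    funext a
    simp [Pi.smul_apply, Complex.real_smul, smul_eq_mul]


end
end

section
/- Let p ∈ ℝ^{d_A} and q ∈ ℝ^{d_B} be probability vectors (nonnegative entries summing to 1). Then the d_A·d_B-dimensional vector with entries p_i q_j (indexed by pairs (i,j)) is majorized by p and is also majorized by q. -/
open Matrix
open scoped Kronecker ComplexOrder

noncomputable section

lemma majorizes_fst_aux {dA dB : ℕ} (p : Fin dA → ℝ) (q : Fin dB → ℝ)
    (hp : ∀ i, 0 ≤ p i) (hq : ∀ j, 0 ≤ q j) (hqs : ∑ j, q j = 1) :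
    Majorizes (fun ij : Fin dA × Fin dB => p ij.1 * q ij.2) p := by
  constructor
  · intro k
    apply Finset.sup'_le
    intro s hs
    simp only [Finset.mem_filter, Finset.mem_powerset] at hs
    have himg : (s.image Prod.fst) ∈ Finset.univ.powerset.filter (fun t => t.card ≤ k) := by
      simp only [Finset.mem_filter, Finset.mem_powerset]
      exact ⟨Finset.subset_univ _, le_trans Finset.card_image_le hs.2⟩
    refine le_trans ?_ (Finset.le_sup' (fun t => ∑ i ∈ t, p i) himg)
    calc ∑ ij ∈ s, p ij.1 * q ij.2
        ≤ ∑ ij ∈ (s.image Prod.fst) ×ˢ Finset.univ, p ij.1 * q ij.2 := by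
          apply Finset.sum_le_sum_of_subset_of_nonneg
          · intro ij hij
            simp only [Finset.mem_product, Finset.mem_image, Finset.mem_univ, and_true]
            exact ⟨ij, hij, rfl⟩
          · intros
            exact mul_nonneg (hp _) (hq _)
      _ = ∑ i ∈ s.image Prod.fst, p i := by
          rw [Finset.sum_product]
          simp [← Finset.mul_sum, hqs]
  · rw [Fintype.sum_prod_type]
    simp [← Finset.mul_sum, hqs]

/-- the product distribution `(p_i q_j)` is majorized by `p` and also by `q`. -/
theorem product_distribution_majorized {dA dB : ℕ} (p : Fin dA → ℝ) (q : Fin dB → ℝ)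
    (hp : ∀ i, 0 ≤ p i) (hq : ∀ j, 0 ≤ q j)
    (hps : ∑ i, p i = 1) (hqs : ∑ j, q j = 1) :
    Majorizes (fun ij : Fin dA × Fin dB => p ij.1 * q ij.2) p ∧
    Majorizes (fun ij : Fin dA × Fin dB => p ij.1 * q ij.2) q := by
  refine ⟨majorizes_fst_aux p q hp hq hqs, ?_⟩
  have h := majorizes_fst_aux q p hq hp hps
  have he : Majorizes (fun ij : Fin dA × Fin dB => p ij.1 * q ij.2)
      (fun ij : Fin dB × Fin dA => q ij.1 * p ij.2) := by
    constructor
    · intro k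
      apply le_of_eq
      unfold topSum
      apply le_antisymm
      · apply Finset.sup'_le
        intro s hs
        simp only [Finset.mem_filter, Finset.mem_powerset] at hs
        have hmem : (s.image (Prod.swap)) ∈
            Finset.univ.powerset.filter (fun t : Finset (Fin dB × Fin dA) => t.card ≤ k) := by
          simp only [Finset.mem_filter, Finset.mem_powerset]
          exact ⟨Finset.subset_univ _, le_trans Finset.card_image_le hs.2⟩
        refine le_trans (le_of_eq ?_) (Finset.le_sup' _ hmem)
        rw [Finset.sum_image (by intro a _ b _ h; exact Prod.swap_injective h)]
        apply Finset.sum_congr rfl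
        intro ij _
        simp [mul_comm]
      · apply Finset.sup'_le
        intro s hs
        simp only [Finset.mem_filter, Finset.mem_powerset] at hs
        have hmem : (s.image (Prod.swap)) ∈
            Finset.univ.powerset.filter (fun t : Finset (Fin dA × Fin dB) => t.card ≤ k) := by
          simp only [Finset.mem_filter, Finset.mem_powerset]
          exact ⟨Finset.subset_univ _, le_trans Finset.card_image_le hs.2⟩
        refine le_trans (le_of_eq ?_) (Finset.le_sup' _ hmem)
        rw [Finset.sum_image (by intro a _ b _ h; exact Prod.swap_injective h)]
        apply Finset.sum_congr rfl
        intro ij _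
        simp [mul_comm]
    · rw [← Equiv.sum_comp (Equiv.prodComm (Fin dA) (Fin dB))]
      apply Finset.sum_congr rfl
      intro ij _
      simp [mul_comm]
  exact ⟨fun k => le_trans (he.1 k) (h.1 k), he.2.trans h.2⟩

end
end

section
/- Let p ∈ ℝ^{d_A} and q ∈ ℝ^{d_B} be probability vectors (nonnegative entries summing to 1), and let G_1,…,G_m be pairwise disjoint sets whose union is {1,…,d_A}×{1,…,d_B}, such that each G_t contains at most one pair with any given second coordinate j. Then the vector r ∈ ℝ^m with entries r_t = Σ_{(i,j)∈G_t} p_i q_j is majorized by p. -/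
open Matrix
open scoped Kronecker ComplexOrder

noncomputable section

/-- grouping the product distribution `(p_i q_j)` along pairwise disjoint groups
covering all pairs, each containing at most one pair with any given second coordinate, yields a
vector majorized by `p`. -/
theorem grouped_product_majorized_left {dA dB m : ℕ} (p : Fin dA → ℝ) (q : Fin dB → ℝ)
    (hp : ∀ i, 0 ≤ p i) (hq : ∀ j, 0 ≤ q j)
    (hps : ∑ i, p i = 1) (hqs : ∑ j, q j = 1)
    (G : Fin m → Finset (Fin dA × Fin dB))
    (hdisj : ∀ s t, s ≠ t → Disjoint (G s) (G t))
    (hcover : ∀ ij : Fin dA × Fin dB, ∃ t, ij ∈ G t)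
    (hsnd : ∀ t, ∀ a ∈ G t, ∀ b ∈ G t, a.2 = b.2 → a = b) :
    Majorizes (fun t => ∑ ij ∈ G t, p ij.1 * q ij.2) p := by
  classical
  have hdisj' : ∀ s ∈ (Finset.univ : Finset (Fin m)), ∀ t ∈ (Finset.univ : Finset (Fin m)),
      s ≠ t → Disjoint (G s) (G t) := fun s _ t _ hst => hdisj s t hst
  constructor
  · intro k
    -- nonnegativity of topSum p k
    have hmem0 : (∅ : Finset (Fin dA)) ∈
        (Finset.univ.powerset.filter fun s => s.card ≤ k) := by simp
    have h0 : (0 : ℝ) ≤ topSum p k := by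
      have := Finset.le_sup' (fun s : Finset (Fin dA) => ∑ i ∈ s, p i) hmem0
      simpa [topSum] using this
    apply Finset.sup'_le
    intro s hs
    have hsk : s.card ≤ k := (Finset.mem_filter.1 hs).2
    -- rewrite sum over s as sum over union of groups
    rw [Finset.sum_biUnion (fun a ha b hb hab => hdisj a b hab) |>.symm]
    set B := s.biUnion G with hB
    -- fiber by second coordinate
    have hfib : ∑ ij ∈ B, p ij.1 * q ij.2
        = ∑ j : Fin dB, ∑ ij ∈ B.filter (fun ij => ij.2 = j), p ij.1 * q ij.2 := by
      exact (Finset.sum_fiberwise_of_maps_to (fun ij _ => Finset.mem_univ ij.2) _).symm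
    rw [hfib]
    have hbound : ∀ j : Fin dB,
        ∑ ij ∈ B.filter (fun ij => ij.2 = j), p ij.1 * q ij.2 ≤ q j * topSum p k := by
      intro j
      set F := B.filter (fun ij => ij.2 = j) with hF
      have hFj : ∀ ij ∈ F, ij.2 = j := fun ij hij => (Finset.mem_filter.1 hij).2
      -- card bound
      have hcard : F.card ≤ k := by
        have hFeq : F = s.biUnion (fun t => (G t).filter (fun ij => ij.2 = j)) := by
          rw [hF, hB, Finset.filter_biUnion]
        have h1 : ∀ t, ((G t).filter (fun ij => ij.2 = j)).card ≤ 1 := by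
          intro t
          apply Finset.card_le_one.2
          intro a ha b hb
          exact hsnd t a (Finset.mem_filter.1 ha).1 b (Finset.mem_filter.1 hb).1
            (by rw [(Finset.mem_filter.1 ha).2, (Finset.mem_filter.1 hb).2])
        calc F.card ≤ ∑ t ∈ s, ((G t).filter (fun ij => ij.2 = j)).card := by
              rw [hFeq]; exact Finset.card_biUnion_le
          _ ≤ ∑ _t ∈ s, 1 := Finset.sum_le_sum (fun t _ => h1 t)
          _ = s.card := by simp
          _ ≤ k := hsk
      -- fst is injective on F
      have hinj : Set.InjOn Prod.fst (F : Set (Fin dA × Fin dB)) := by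
        intro a ha b hb hab
        exact Prod.ext hab ((hFj a ha).trans (hFj b hb).symm)
      have hsum1 : ∑ ij ∈ F, p ij.1 = ∑ i ∈ F.image Prod.fst, p i :=
        (Finset.sum_image (fun a ha b hb => hinj ha hb)).symm
      have himg : (F.image Prod.fst) ∈
          (Finset.univ.powerset.filter fun s => s.card ≤ k) := by
        refine Finset.mem_filter.2 ⟨by simp, le_trans Finset.card_image_le hcard⟩
      have hle : ∑ i ∈ F.image Prod.fst, p i ≤ topSum p k :=
        Finset.le_sup' (fun s : Finset (Fin dA) => ∑ i ∈ s, p i) himg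
      calc ∑ ij ∈ F, p ij.1 * q ij.2 = ∑ ij ∈ F, p ij.1 * q j := by
            apply Finset.sum_congr rfl; intro ij hij; rw [hFj ij hij]
        _ = (∑ ij ∈ F, p ij.1) * q j := by rw [Finset.sum_mul]
        _ ≤ topSum p k * q j := by
            apply mul_le_mul_of_nonneg_right _ (hq j)
            rw [hsum1]; exact hle
        _ = q j * topSum p k := mul_comm _ _
    calc ∑ j : Fin dB, ∑ ij ∈ B.filter (fun ij => ij.2 = j), p ij.1 * q ij.2
        ≤ ∑ j : Fin dB, q j * topSum p k := Finset.sum_le_sum (fun j _ => hbound j)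
      _ = (∑ j, q j) * topSum p k := by rw [Finset.sum_mul]
      _ = topSum p k := by rw [hqs, one_mul]
  · have hcov : (Finset.univ : Finset (Fin m)).biUnion G = Finset.univ := by
      apply Finset.eq_univ_of_forall
      intro ij
      obtain ⟨t, ht⟩ := hcover ij
      exact Finset.mem_biUnion.2 ⟨t, Finset.mem_univ t, ht⟩
    calc ∑ t, ∑ ij ∈ G t, p ij.1 * q ij.2
        = ∑ ij ∈ (Finset.univ : Finset (Fin m)).biUnion G, p ij.1 * q ij.2 :=
          (Finset.sum_biUnion (fun a _ b _ hab => hdisj a b hab)).symm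
      _ = ∑ ij : Fin dA × Fin dB, p ij.1 * q ij.2 := by rw [hcov]
      _ = (∑ i, p i) * (∑ j, q j) := by
          rw [Finset.sum_mul_sum]; exact Fintype.sum_prod_type _
      _ = ∑ i, p i := by rw [hqs, mul_one]

end
end

section
/- Let p ∈ ℝ^{d_A} and q ∈ ℝ^{d_B} be probability vectors (nonnegative entries summing to 1), and let G_1,…,G_m be pairwise disjoint sets whose union is {1,…,d_A}×{1,…,d_B}, such that each G_t contains at most one pair with any given first coordinate i. Then the vector r ∈ ℝ^m with entries r_t = Σ_{(i,j)∈G_t} p_i q_j is majorized by q. -/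
open Matrix
open scoped Kronecker ComplexOrder

noncomputable section

/-- grouping the product distribution `(p_i q_j)` along pairwise disjoint groups
covering all pairs, each containing at most one pair with any given first coordinate, yields a
vector majorized by `q`. -/
theorem grouped_product_majorized_right {dA dB m : ℕ} (p : Fin dA → ℝ) (q : Fin dB → ℝ)
    (hp : ∀ i, 0 ≤ p i) (hq : ∀ j, 0 ≤ q j)
    (hps : ∑ i, p i = 1) (hqs : ∑ j, q j = 1)
    (G : Fin m → Finset (Fin dA × Fin dB))
    (hdisj : ∀ s t, s ≠ t → Disjoint (G s) (G t))
    (hcover : ∀ ij : Fin dA × Fin dB, ∃ t, ij ∈ G t)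
    (hfst : ∀ t, ∀ a ∈ G t, ∀ b ∈ G t, a.1 = b.1 → a = b) :
    Majorizes (fun t => ∑ ij ∈ G t, p ij.1 * q ij.2) q := by
  classical
  constructor
  · intro k
    unfold topSum
    apply Finset.sup'_le
    intro S hS
    simp only [Finset.mem_filter, Finset.mem_powerset] at hS
    obtain ⟨-, hScard⟩ := hS
    set B := S.biUnion G with hB
    have hsum1 : ∑ t ∈ S, ∑ ij ∈ G t, p ij.1 * q ij.2 = ∑ ij ∈ B, p ij.1 * q ij.2 :=
      (Finset.sum_biUnion (fun s _ t _ hst => hdisj s t hst)).symm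
    rw [hsum1]
    have hfib : ∑ ij ∈ B, p ij.1 * q ij.2
        = ∑ i : Fin dA, ∑ ij ∈ B.filter (fun ij => ij.1 = i), p ij.1 * q ij.2 := by
      rw [Finset.sum_fiberwise_of_maps_to (fun x _ => Finset.mem_univ x.1)]
    rw [hfib]
    have key : ∀ i, ∑ ij ∈ B.filter (fun ij => ij.1 = i), p ij.1 * q ij.2
        ≤ p i * topSum q k := by
      intro i
      set F := B.filter (fun ij => ij.1 = i) with hF
      set J := F.image Prod.snd with hJ
      have hcardF : F.card ≤ k := by
        rcases F.eq_empty_or_nonempty with hFe | ⟨x0, hx0⟩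
        · simp [hFe]
        have hle : F.card ≤ S.card := by
          have hchoice : ∀ ij ∈ F, ∃ t ∈ S, ij ∈ G t := by
            intro ij hij
            rw [hF, Finset.mem_filter] at hij
            rw [hB, Finset.mem_biUnion] at hij
            exact hij.1
          choose f hfS hfG using hchoice
          apply Finset.card_le_card_of_injOn
            (fun ij => if h : ij ∈ F then f ij h else f x0 hx0)
          · intro ij hij; simp only [Finset.mem_coe] at hij ⊢; rw [dif_pos hij]; exact hfS ij hij
          · intro a ha b hb hab
            simp only [Finset.mem_coe] at ha hb
            dsimp only at hab
            rw [dif_pos ha, dif_pos hb] at hab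
            have haG := hfG a ha
            have hbG := hfG b hb
            rw [hab] at haG
            have ha1 : a.1 = i := (Finset.mem_filter.mp ha).2
            have hb1 : b.1 = i := (Finset.mem_filter.mp hb).2
            exact hfst _ _ haG _ hbG (ha1.trans hb1.symm)
        omega
      have hcardJ : J.card ≤ k := le_trans Finset.card_image_le hcardF
      have hsumJ : ∑ ij ∈ F, p ij.1 * q ij.2 = p i * ∑ j ∈ J, q j := by
        rw [Finset.mul_sum, hJ, Finset.sum_image ?_]
        · apply Finset.sum_congr rfl
          intro x hx
          have hx1 : x.1 = i := (Finset.mem_filter.mp hx).2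
          rw [hx1]
        · intro a ha b hb hab
          have ha1 : a.1 = i := (Finset.mem_filter.mp ha).2
          have hb1 : b.1 = i := (Finset.mem_filter.mp hb).2
          exact Prod.ext (ha1.trans hb1.symm) hab
      rw [hsumJ]
      apply mul_le_mul_of_nonneg_left ?_ (hp i)
      exact Finset.le_sup' (fun s => ∑ j ∈ s, q j) (Finset.mem_filter.mpr
        ⟨Finset.mem_powerset.mpr (Finset.subset_univ _), hcardJ⟩)
    calc ∑ i, ∑ ij ∈ B.filter (fun ij => ij.1 = i), p ij.1 * q ij.2
        ≤ ∑ i, p i * topSum q k := Finset.sum_le_sum fun i _ => key i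
      _ = topSum q k := by rw [← Finset.sum_mul, hps, one_mul]
  · have huniv : Finset.univ.biUnion G = (Finset.univ : Finset (Fin dA × Fin dB)) := by
      apply Finset.eq_univ_of_forall
      intro ij
      rw [Finset.mem_biUnion]
      obtain ⟨t, ht⟩ := hcover ij
      exact ⟨t, Finset.mem_univ t, ht⟩
    calc ∑ t, ∑ ij ∈ G t, p ij.1 * q ij.2
        = ∑ ij ∈ Finset.univ.biUnion G, p ij.1 * q ij.2 :=
          (Finset.sum_biUnion (fun s _ t _ hst => hdisj s t hst)).symm
      _ = ∑ ij : Fin dA × Fin dB, p ij.1 * q ij.2 := by rw [huniv]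
      _ = (∑ i, p i) * (∑ j, q j) := by
          rw [Finset.sum_mul_sum, ← Finset.sum_product']
          rfl
      _ = ∑ j, q j := by rw [hps, one_mul]

end
end

section
/- Let X_A = Σ_{i=1}^{d_A} α_i |x_i^A⟩⟨x_i^A| and X_B = Σ_{j=1}^{d_B} β_j |x_j^B⟩⟨x_j^B| be Hermitian matrices whose eigenvalues α_1,…,α_{d_A} are pairwise distinct and nonzero and β_1,…,β_{d_B} are pairwise distinct and nonzero, with orthonormal eigenbases {x_i^A} of ℂ^{d_A} and {x_j^B} of ℂ^{d_B}. Then for all density matrices ρ_A on ℂ^{d_A} and ρ_B on ℂ^{d_B}, the grouped distribution of the joint measurement distribution of ρ_A ⊗ ρ_B in the basis {x_i^A ⊗ x_j^B} (grouped by the distinct values of α_i β_j) is majorized by the measurement distribution p(x^A|ρ_A), and is also majorized by p(x^B|ρ_B). -/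
open Matrix
open scoped Kronecker ComplexOrder

noncomputable section

-- ===== auxiliary lemmas =====

lemma sum_le_topSum {ι : Type*} [Fintype ι] (v : ι → ℝ) {k : ℕ} {S : Finset ι}
    (hS : S.card ≤ k) : ∑ i ∈ S, v i ≤ topSum v k := by
  apply Finset.le_sup' (fun s => ∑ i ∈ s, v i)
  simp [hS]

lemma topSum_le {ι : Type*} [Fintype ι] (v : ι → ℝ) {k : ℕ} {r : ℝ}
    (h : ∀ S : Finset ι, S.card ≤ k → ∑ i ∈ S, v i ≤ r) : topSum v k ≤ r := by
  apply Finset.sup'_le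
  intro S hS
  simp only [Finset.mem_filter, Finset.mem_powerset] at hS
  exact h S hS.2

/-- there is a set of the `k` largest entries -/
lemma exists_top_set {ι : Type*} [Fintype ι] (v : ι → ℝ) (k : ℕ) (hk : k ≤ Fintype.card ι) :
    ∃ T : Finset ι, T.card = k ∧ ∀ i ∈ T, ∀ j ∉ T, v j ≤ v i := by
  classical
  set F := Finset.univ.powerset.filter fun s : Finset ι => s.card = k with hF
  have hFne : F.Nonempty := by
    obtain ⟨t, -, ht⟩ := Finset.exists_subset_card_eq (s := (Finset.univ : Finset ι))
      (by simpa using hk)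
    exact ⟨t, by simp [hF, ht]⟩
  obtain ⟨T, hTF, hTmax⟩ := Finset.exists_max_image F (fun s => ∑ i ∈ s, v i) hFne
  have hTcard : T.card = k := by simpa [hF] using hTF
  refine ⟨T, hTcard, ?_⟩
  intro i hi j hj
  by_contra hlt
  push_neg at hlt
  set T' := insert j (T.erase i) with hT'
  have hjT' : j ∉ T.erase i := fun h => hj (Finset.mem_of_mem_erase h)
  have hT'card : T'.card = k := by
    have hk1 : 1 ≤ k := hTcard ▸ Finset.card_pos.mpr ⟨i, hi⟩
    rw [hT', Finset.card_insert_of_notMem hjT', Finset.card_erase_of_mem hi, hTcard]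
    omega
  have hT'F : T' ∈ F := by simp [hF, hT'card]
  have hsum : ∑ x ∈ T', v x = ∑ x ∈ T, v x - v i + v j := by
    rw [hT', Finset.sum_insert hjT', Finset.sum_erase_eq_sub hi]; ring
  have := hTmax T' hT'F
  rw [hsum] at this
  linarith

/-- LP bound: if `0 ≤ c ≤ 1`, `∑ c ≤ k`, `0 ≤ v`, then `∑ v*c ≤ topSum v k`. -/
lemma lp_bound {ι : Type*} [Fintype ι] (v c : ι → ℝ) (k : ℕ)
    (hv : ∀ i, 0 ≤ v i) (hc0 : ∀ i, 0 ≤ c i) (hc1 : ∀ i, c i ≤ 1)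
    (hck : ∑ i, c i ≤ (k : ℝ)) : ∑ i, v i * c i ≤ topSum v k := by
  classical
  by_cases hk : Fintype.card ι ≤ k
  · calc ∑ i, v i * c i ≤ ∑ i, v i := by
          apply Finset.sum_le_sum; intro i _
          calc v i * c i ≤ v i * 1 := mul_le_mul_of_nonneg_left (hc1 i) (hv i)
            _ = v i := mul_one _
      _ ≤ topSum v k := sum_le_topSum v (by simpa using hk)
  · push_neg at hk
    obtain ⟨T, hTcard, hTtop⟩ := exists_top_set v k (le_of_lt hk)
    rcases Nat.eq_zero_or_pos k with hk0 | hkpos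
    · have : ∀ i, c i = 0 := by
        intro i
        have h1 : ∑ j, c j ≤ 0 := by simpa [hk0] using hck
        have h2 : c i ≤ ∑ j, c j := Finset.single_le_sum (fun j _ => hc0 j) (Finset.mem_univ i)
        exact le_antisymm (by linarith) (hc0 i)
      have h0 : ∑ i, v i * c i = 0 := by simp [this]
      rw [h0]
      have : (0:ℝ) = ∑ i ∈ (∅ : Finset ι), v i := by simp
      rw [this]
      exact sum_le_topSum v (by simp)
    · have hTne : T.Nonempty := Finset.card_pos.mp (by omega)
      obtain ⟨i₀, hi₀, hmin⟩ := Finset.exists_min_image T v hTne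
      set t := v i₀ with ht
      have ht0 : 0 ≤ t := hv i₀
      have key : ∑ i, v i * c i = (∑ i, (v i - t) * c i) + t * ∑ i, c i := by
        rw [Finset.mul_sum, ← Finset.sum_add_distrib]
        apply Finset.sum_congr rfl; intro i _; ring
      have h1 : ∑ i, (v i - t) * c i ≤ ∑ i ∈ T, (v i - t) := by
        rw [← Finset.sum_filter_add_sum_filter_not Finset.univ (· ∈ T)]
        have e1 : Finset.univ.filter (· ∈ T) = T := by ext i; simp
        have e2 : ∑ i ∈ Finset.univ.filter (¬ · ∈ T), (v i - t) * c i ≤ 0 := by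
          apply Finset.sum_nonpos
          intro i hi
          simp only [Finset.mem_filter] at hi
          have : v i ≤ t := hTtop i₀ hi₀ i hi.2
          exact mul_nonpos_of_nonpos_of_nonneg (by linarith) (hc0 i)
        have e3 : ∑ i ∈ Finset.univ.filter (· ∈ T), (v i - t) * c i ≤ ∑ i ∈ T, (v i - t) := by
          rw [e1]
          apply Finset.sum_le_sum
          intro i hi
          have hvt : 0 ≤ v i - t := by have := hmin i hi; linarith
          calc (v i - t) * c i ≤ (v i - t) * 1 := mul_le_mul_of_nonneg_left (hc1 i) hvt
            _ = v i - t := mul_one _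
        calc _ ≤ ∑ i ∈ T, (v i - t) + 0 := by rw [e1] at e3 ⊢; exact add_le_add e3 e2
          _ = _ := add_zero _
      have h2 : t * ∑ i, c i ≤ t * k := mul_le_mul_of_nonneg_left hck ht0
      have h3 : ∑ i ∈ T, (v i - t) + t * k = ∑ i ∈ T, v i := by
        rw [Finset.sum_sub_distrib, Finset.sum_const, hTcard]
        ring
      calc ∑ i, v i * c i = _ := key
        _ ≤ ∑ i ∈ T, (v i - t) + t * k := add_le_add h1 h2
        _ = ∑ i ∈ T, v i := h3
        _ ≤ topSum v k := sum_le_topSum v (le_of_eq hTcard)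

lemma topSum_comp_le {ι κ : Type*} [Fintype ι] [Fintype κ] (e : κ ≃ ι) (v : ι → ℝ)
    (k : ℕ) : topSum (fun j => v (e j)) k ≤ topSum v k := by
  classical
  apply topSum_le
  intro S hS
  have h : ∑ i ∈ S, v (e i) = ∑ i ∈ S.image e, v i := by
    rw [Finset.sum_image (fun a _ b _ h => e.injective h)]
  rw [h]
  exact sum_le_topSum v (le_trans Finset.card_image_le hS)

lemma topSum_comp_equiv {ι κ : Type*} [Fintype ι] [Fintype κ] (e : κ ≃ ι) (v : ι → ℝ)
    (k : ℕ) : topSum (fun j => v (e j)) k = topSum v k := by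
  refine le_antisymm (topSum_comp_le e v k) ?_
  have := topSum_comp_le e.symm (fun j => v (e j)) k
  simpa using this

lemma majorizes_comp_equiv {ι κ μ : Type*} [Fintype ι] [Fintype κ] [Fintype μ]
    (e : κ ≃ ι) (v : ι → ℝ) (w : μ → ℝ) (h : Majorizes v w) :
    Majorizes (fun j => v (e j)) w := by
  refine ⟨fun k => ?_, ?_⟩
  · rw [topSum_comp_equiv e v k]; exact h.1 k
  · rw [Equiv.sum_comp e v]; exact h.2

section GroupedAux
open scoped Classical
variable {dA dB : ℕ}

lemma grouped_total_sum (α : Fin dA → ℝ) (β : Fin dB → ℝ) (p : Fin dA × Fin dB → ℝ) :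
    ∑ l : valueSet α β, groupedDist α β p l = ∑ ij, p ij := by
  have h1 : ∑ l : valueSet α β, groupedDist α β p l
      = ∑ μ ∈ valueSet α β,
          ∑ ij ∈ Finset.univ.filter (fun ij : Fin dA × Fin dB => α ij.1 * β ij.2 = μ), p ij :=
    Finset.sum_coe_sort (valueSet α β)
      (fun μ => ∑ ij ∈ Finset.univ.filter (fun ij : Fin dA × Fin dB => α ij.1 * β ij.2 = μ), p ij)
  rw [h1]
  exact Finset.sum_fiberwise_of_maps_to
    (fun ij _ => Finset.mem_image_of_mem (fun ij : Fin dA × Fin dB => α ij.1 * β ij.2)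
      (Finset.mem_univ ij)) p

/-- Key half: grouped product distribution is majorized by the first marginal. -/
lemma maj_half (α : Fin dA → ℝ) (β : Fin dB → ℝ)
    (hα : Function.Injective α) (hβ0 : ∀ j, β j ≠ 0)
    (a : Fin dA → ℝ) (b : Fin dB → ℝ)
    (ha0 : ∀ i, 0 ≤ a i) (hb0 : ∀ j, 0 ≤ b j)
    (ha1 : ∑ i, a i = 1) (hb1 : ∑ j, b j = 1) :
    Majorizes (groupedDist α β (fun ij => a ij.1 * b ij.2)) a := by
  have hqsum : ∑ l : valueSet α β, groupedDist α β (fun ij => a ij.1 * b ij.2) l = 1 := by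
    rw [grouped_total_sum, Fintype.sum_prod_type, ← Finset.sum_mul_sum, ha1, hb1, one_mul]
  constructor
  · intro k
    apply topSum_le
    intro S hS
    set S' : Finset ℝ := S.image Subtype.val with hS'
    have hS'card : S'.card ≤ k := le_trans Finset.card_image_le hS
    have hfib : ∀ μ ∈ S',
        Finset.univ.filter (fun ij : Fin dA × Fin dB => α ij.1 * β ij.2 = μ)
          = (Finset.univ.filter (fun ij : Fin dA × Fin dB => α ij.1 * β ij.2 ∈ S')).filter
              (fun ij => α ij.1 * β ij.2 = μ) := by
      intro μ hμ
      rw [Finset.filter_filter]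
      apply Finset.filter_congr
      intro ij _
      constructor
      · intro h; exact ⟨h ▸ hμ, h⟩
      · intro h; exact h.2
    have step1 : ∀ (r : Fin dA × Fin dB → ℝ), ∑ μ ∈ S',
          ∑ ij ∈ Finset.univ.filter (fun ij : Fin dA × Fin dB => α ij.1 * β ij.2 = μ), r ij
        = ∑ ij ∈ Finset.univ.filter
            (fun ij : Fin dA × Fin dB => α ij.1 * β ij.2 ∈ S'), r ij := by
      intro r
      rw [Finset.sum_congr rfl (fun μ hμ => by rw [hfib μ hμ])]
      exact Finset.sum_fiberwise_of_maps_to (fun ij hij => (Finset.mem_filter.mp hij).2) r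
    have hSsum : ∀ (r : Fin dA × Fin dB → ℝ),
        ∑ l ∈ S, (∑ ij ∈ Finset.univ.filter
            (fun ij : Fin dA × Fin dB => α ij.1 * β ij.2 = (l : ℝ)), r ij)
        = ∑ ij ∈ Finset.univ.filter
            (fun ij : Fin dA × Fin dB => α ij.1 * β ij.2 ∈ S'), r ij := by
      intro r
      rw [← step1 r, hS', Finset.sum_image (fun x _ y _ h => Subtype.val_injective h)]
    set c : Fin dA → ℝ := fun i => ∑ j ∈ Finset.univ.filter (fun j => α i * β j ∈ S'), b j
      with hc
    have step2 : ∑ ij ∈ Finset.univ.filter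
        (fun ij : Fin dA × Fin dB => α ij.1 * β ij.2 ∈ S'), a ij.1 * b ij.2
        = ∑ i, a i * c i := by
      rw [Finset.sum_filter, Fintype.sum_prod_type]
      apply Finset.sum_congr rfl
      intro i _
      rw [hc]
      simp only [Finset.sum_filter, Finset.mul_sum]
      apply Finset.sum_congr rfl
      intro j _
      split <;> simp
    have hc0 : ∀ i, 0 ≤ c i := fun i => Finset.sum_nonneg fun j _ => hb0 j
    have hc1 : ∀ i, c i ≤ 1 := by
      intro i
      calc c i ≤ ∑ j, b j := Finset.sum_le_sum_of_subset_of_nonneg (Finset.filter_subset _ _)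
            (fun j _ _ => hb0 j)
        _ = 1 := hb1
    have fiber_b : ∀ μ : ℝ,
        ∑ ij ∈ Finset.univ.filter (fun ij : Fin dA × Fin dB => α ij.1 * β ij.2 = μ),
          b ij.2 ≤ 1 := by
      intro μ
      have hinj : ∀ x ∈ Finset.univ.filter (fun ij : Fin dA × Fin dB => α ij.1 * β ij.2 = μ),
          ∀ y ∈ Finset.univ.filter (fun ij : Fin dA × Fin dB => α ij.1 * β ij.2 = μ),
          x.2 = y.2 → x = y := by
        rintro ⟨i, j⟩ hx ⟨i', j'⟩ hy h2
        simp only at h2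
        subst h2
        simp only [Finset.mem_filter] at hx hy
        have : α i = α i' := mul_right_cancel₀ (hβ0 j) (hx.2.trans hy.2.symm)
        simp [hα this]
      calc ∑ ij ∈ Finset.univ.filter (fun ij : Fin dA × Fin dB => α ij.1 * β ij.2 = μ), b ij.2
          = ∑ j ∈ (Finset.univ.filter
              (fun ij : Fin dA × Fin dB => α ij.1 * β ij.2 = μ)).image Prod.snd, b j :=
            (Finset.sum_image hinj).symm
        _ ≤ ∑ j, b j := Finset.sum_le_sum_of_subset_of_nonneg (Finset.subset_univ _)
            (fun j _ _ => hb0 j)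
        _ = 1 := hb1
    have hck : ∑ i, c i ≤ (k : ℝ) := by
      have e1 : ∑ i, c i = ∑ ij ∈ Finset.univ.filter
          (fun ij : Fin dA × Fin dB => α ij.1 * β ij.2 ∈ S'), b ij.2 := by
        rw [Finset.sum_filter, Fintype.sum_prod_type]
        apply Finset.sum_congr rfl
        intro i _
        rw [hc]
        simp [Finset.sum_filter]
      have e2 : ∑ ij ∈ Finset.univ.filter
          (fun ij : Fin dA × Fin dB => α ij.1 * β ij.2 ∈ S'), b ij.2 ≤ (S'.card : ℝ) := by
        rw [← step1 (fun ij => b ij.2)]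
        calc ∑ μ ∈ S', ∑ ij ∈ Finset.univ.filter
              (fun ij : Fin dA × Fin dB => α ij.1 * β ij.2 = μ), b ij.2
            ≤ ∑ _μ ∈ S', (1 : ℝ) := Finset.sum_le_sum (fun μ _ => fiber_b μ)
          _ = (S'.card : ℝ) := by simp
      calc ∑ i, c i = _ := e1
        _ ≤ (S'.card : ℝ) := e2
        _ ≤ (k : ℝ) := by exact_mod_cast hS'card
    calc ∑ l ∈ S, groupedDist α β (fun ij => a ij.1 * b ij.2) l
        = ∑ ij ∈ Finset.univ.filter
            (fun ij : Fin dA × Fin dB => α ij.1 * β ij.2 ∈ S'), a ij.1 * b ij.2 :=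
          hSsum (fun ij => a ij.1 * b ij.2)
      _ = ∑ i, a i * c i := step2
      _ ≤ topSum a k := lp_bound a c k ha0 hc0 hc1 hck
  · rw [hqsum, ha1]

lemma valueSet_mem_comm (α : Fin dA → ℝ) (β : Fin dB → ℝ) (x : ℝ) :
    x ∈ valueSet α β ↔ x ∈ valueSet β α := by
  unfold valueSet
  simp only [Finset.mem_image, Finset.mem_univ, true_and]
  constructor
  · rintro ⟨⟨i, j⟩, h⟩; exact ⟨⟨j, i⟩, by simpa [mul_comm] using h⟩
  · rintro ⟨⟨j, i⟩, h⟩; exact ⟨⟨i, j⟩, by simpa [mul_comm] using h⟩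

def valueSwap (α : Fin dA → ℝ) (β : Fin dB → ℝ) :
    {x // x ∈ valueSet α β} ≃ {x // x ∈ valueSet β α} :=
  Equiv.subtypeEquivRight (valueSet_mem_comm α β)

lemma groupedDist_swap (α : Fin dA → ℝ) (β : Fin dB → ℝ) (p : Fin dA × Fin dB → ℝ)
    (l : valueSet α β) :
    groupedDist α β p l = groupedDist β α (fun ji => p (ji.2, ji.1)) (valueSwap α β l) := by
  unfold groupedDist
  refine Finset.sum_equiv (Equiv.prodComm (Fin dA) (Fin dB)) ?_ ?_
  · intro ij
    simp only [Finset.mem_filter, Finset.mem_univ, true_and, Equiv.prodComm_apply, Prod.snd_swap,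
      Prod.fst_swap]
    have : ((valueSwap α β l : ℝ)) = (l : ℝ) := rfl
    rw [this, mul_comm]
  · intro ij _
    rfl

end GroupedAux

lemma joint_factor {dA dB : ℕ} (A : Matrix (Fin dA) (Fin dA) ℂ) (B : Matrix (Fin dB) (Fin dB) ℂ)
    (u : Fin dA → ℂ) (v : Fin dB → ℂ) :
    star (tensorVec u v) ⬝ᵥ ((A ⊗ₖ B) *ᵥ tensorVec u v)
      = (star u ⬝ᵥ (A *ᵥ u)) * (star v ⬝ᵥ (B *ᵥ v)) := by
  calc star (tensorVec u v) ⬝ᵥ ((A ⊗ₖ B) *ᵥ tensorVec u v)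
      = ∑ i, ∑ j, ((starRingEnd ℂ) (u i) * (starRingEnd ℂ) (v j))
          * (∑ k, ∑ l, (A i k * B j l) * (u k * v l)) := by
        simp only [dotProduct, mulVec, tensorVec, Matrix.kroneckerMap_apply,
          Fintype.sum_prod_type, Pi.star_apply, star_mul', Complex.star_def]
    _ = ∑ i, ∑ j, ((starRingEnd ℂ) (u i) * (∑ k, A i k * u k))
          * ((starRingEnd ℂ) (v j) * (∑ l, B j l * v l)) := by
        apply Finset.sum_congr rfl; intro i _
        apply Finset.sum_congr rfl; intro j _
        have lhs' : ((starRingEnd ℂ) (u i) * (starRingEnd ℂ) (v j))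
            * (∑ k, ∑ l, (A i k * B j l) * (u k * v l))
            = ∑ k, ∑ l, ((starRingEnd ℂ) (u i) * (starRingEnd ℂ) (v j))
                * ((A i k * B j l) * (u k * v l)) := by
          rw [Finset.mul_sum]
          exact Finset.sum_congr rfl fun k _ => Finset.mul_sum _ _ _
        have rhs' : ((starRingEnd ℂ) (u i) * (∑ k, A i k * u k))
            * ((starRingEnd ℂ) (v j) * (∑ l, B j l * v l))
            = ∑ k, ∑ l, ((starRingEnd ℂ) (u i) * (A i k * u k))
                * ((starRingEnd ℂ) (v j) * (B j l * v l)) := by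
          rw [Finset.mul_sum, Finset.mul_sum, Finset.sum_mul_sum]
        rw [lhs', rhs']
        apply Finset.sum_congr rfl; intro k _
        apply Finset.sum_congr rfl; intro l _
        ring
    _ = (star u ⬝ᵥ (A *ᵥ u)) * (star v ⬝ᵥ (B *ᵥ v)) := by
        simp only [dotProduct, mulVec, Pi.star_apply, Complex.star_def]
        rw [Finset.sum_mul_sum]

lemma quadform_coe {d : ℕ} {ρ : Matrix (Fin d) (Fin d) ℂ} (h : ρ.PosSemidef)
    (u : Fin d → ℂ) : star u ⬝ᵥ (ρ *ᵥ u) = ((star u ⬝ᵥ (ρ *ᵥ u)).re : ℂ) := by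
  have h2 := h.dotProduct_mulVec_nonneg u
  rw [Complex.le_def] at h2
  apply Complex.ext
  · simp
  · simp [← h2.2]

lemma measDist_nonneg {d : ℕ} {x : Fin d → Fin d → ℂ} {ρ : Matrix (Fin d) (Fin d) ℂ}
    (h : ρ.PosSemidef) (i : Fin d) : 0 ≤ measDist x ρ i := by
  have h2 := h.dotProduct_mulVec_nonneg (x i)
  rw [Complex.le_def] at h2
  simpa [measDist] using h2.1

lemma onb_complete {d : ℕ} {x : Fin d → Fin d → ℂ} (hx : OrthonormalBasisVecs x)
    (k l : Fin d) : ∑ i, (starRingEnd ℂ) (x i k) * x i l = if k = l then 1 else 0 := by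
  set U : Matrix (Fin d) (Fin d) ℂ := Matrix.of (fun i k => x i k) with hU
  have hUU : U * Uᴴ = 1 := by
    ext i j
    have := hx j i
    simp only [dotProduct, Pi.star_apply, Complex.star_def] at this
    simp only [Matrix.mul_apply, Matrix.conjTranspose_apply, hU, Matrix.of_apply,
      Matrix.one_apply]
    calc ∑ k, x i k * (starRingEnd ℂ) (x j k) = ∑ k, (starRingEnd ℂ) (x j k) * x i k :=
          Finset.sum_congr rfl fun k _ => mul_comm _ _
      _ = if j = i then 1 else 0 := this
      _ = if i = j then 1 else 0 := by by_cases h : i = j <;> simp [h, eq_comm]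
  have hUU' : Uᴴ * U = 1 := mul_eq_one_comm.mp hUU
  have := congrArg (fun M => M k l) hUU'
  simp only [Matrix.mul_apply, Matrix.conjTranspose_apply, hU, Matrix.of_apply,
    Matrix.one_apply] at this
  exact this

lemma measDist_sum {d : ℕ} {x : Fin d → Fin d → ℂ} {ρ : Matrix (Fin d) (Fin d) ℂ}
    (hx : OrthonormalBasisVecs x) (hρ : IsDensityMatrix ρ) : ∑ i, measDist x ρ i = 1 := by
  have key : ∑ i, star (x i) ⬝ᵥ (ρ *ᵥ x i) = ρ.trace := by
    calc ∑ i, star (x i) ⬝ᵥ (ρ *ᵥ x i)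
        = ∑ i, ∑ k, ∑ l, (starRingEnd ℂ) (x i k) * (ρ k l * x i l) := by
          simp only [dotProduct, mulVec, Pi.star_apply, Complex.star_def]
          exact Finset.sum_congr rfl fun i _ => Finset.sum_congr rfl fun k _ =>
            Finset.mul_sum _ _ _
      _ = ∑ k, ∑ l, ∑ i, (starRingEnd ℂ) (x i k) * (ρ k l * x i l) := by
          rw [Finset.sum_comm]
          exact Finset.sum_congr rfl fun k _ => Finset.sum_comm
      _ = ∑ k, ∑ l, ρ k l * ∑ i, (starRingEnd ℂ) (x i k) * x i l := by
          apply Finset.sum_congr rfl; intro k _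
          apply Finset.sum_congr rfl; intro l _
          rw [Finset.mul_sum]
          exact Finset.sum_congr rfl fun i _ => by ring
      _ = ∑ k, ∑ l, ρ k l * (if k = l then 1 else 0) :=
          Finset.sum_congr rfl fun k _ => Finset.sum_congr rfl fun l _ => by
            rw [onb_complete hx]
      _ = ∑ k, ρ k k := by
          apply Finset.sum_congr rfl; intro k _
          simp [Finset.sum_ite_eq, mul_ite]
      _ = ρ.trace := by simp [Matrix.trace, Matrix.diag]
  have h1 : (∑ i, star (x i) ⬝ᵥ (ρ *ᵥ x i)).re = (1 : ℝ) := by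
    rw [key, hρ.2]; simp
  rw [← h1, Complex.re_sum]
  rfl

/-- Gühne–Lewenstein, Lemma 1: for product states `ρ_A ⊗ ρ_B`, the grouped joint
distribution in the product eigenbasis of `X_A ⊗ X_B` (grouped by the distinct values of
`α i * β j`) is majorized by each marginal measurement distribution. -/
theorem grouped_joint_dist_product_state_majorized {dA dB : ℕ}
    (α : Fin dA → ℝ) (β : Fin dB → ℝ)
    (hα : Function.Injective α) (hα0 : ∀ i, α i ≠ 0)
    (hβ : Function.Injective β) (hβ0 : ∀ j, β j ≠ 0)
    (xA : Fin dA → Fin dA → ℂ) (xB : Fin dB → Fin dB → ℂ)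
    (hxA : OrthonormalBasisVecs xA) (hxB : OrthonormalBasisVecs xB)
    (ρA : Matrix (Fin dA) (Fin dA) ℂ) (ρB : Matrix (Fin dB) (Fin dB) ℂ)
    (hρA : IsDensityMatrix ρA) (hρB : IsDensityMatrix ρB) :
    Majorizes (groupedDist α β (jointDist xA xB (ρA ⊗ₖ ρB))) (measDist xA ρA) ∧
    Majorizes (groupedDist α β (jointDist xA xB (ρA ⊗ₖ ρB))) (measDist xB ρB) := by
  set pA := measDist xA ρA with hpA
  set pB := measDist xB ρB with hpB
  have hfact : jointDist xA xB (ρA ⊗ₖ ρB) = fun ij => pA ij.1 * pB ij.2 := by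
    funext ij
    show (star (tensorVec (xA ij.1) (xB ij.2)) ⬝ᵥ
      ((ρA ⊗ₖ ρB) *ᵥ tensorVec (xA ij.1) (xB ij.2))).re = pA ij.1 * pB ij.2
    rw [joint_factor, quadform_coe hρA.1 (xA ij.1), quadform_coe hρB.1 (xB ij.2),
      ← Complex.ofReal_mul, Complex.ofReal_re]
    rfl
  have hA0 : ∀ i, 0 ≤ pA i := fun i => measDist_nonneg hρA.1 i
  have hB0 : ∀ j, 0 ≤ pB j := fun j => measDist_nonneg hρB.1 j
  have hA1 : ∑ i, pA i = 1 := measDist_sum hxA hρA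
  have hB1 : ∑ j, pB j = 1 := measDist_sum hxB hρB
  rw [hfact]
  constructor
  · exact maj_half α β hα hβ0 pA pB hA0 hB0 hA1 hB1
  · have hm : Majorizes (groupedDist β α (fun ji => pB ji.1 * pA ji.2)) pB :=
      maj_half β α hβ hα0 pB pA hB0 hA0 hB1 hA1
    have hm2 : Majorizes
        (fun l => groupedDist β α (fun ji => pB ji.1 * pA ji.2) (valueSwap α β l)) pB :=
      majorizes_comp_equiv (valueSwap α β) _ pB hm
    have heq : (groupedDist α β (fun ij => pA ij.1 * pB ij.2))
        = fun l => groupedDist β α (fun ji => pB ji.1 * pA ji.2) (valueSwap α β l) := by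
      funext l
      rw [groupedDist_swap α β (fun ij => pA ij.1 * pB ij.2) l]
      congr 1
      funext ji
      exact mul_comm _ _
    rw [heq]
    exact hm2

end
end
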